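/- arXiv:2402.09254 — 6 statements merged into one kernel-verified Lean document; each statement's English description precedes it below -/
import Mathlib

section
/- Let G be a graph on n ≥ 3 vertices and let f : (unordered pairs of V(G)) → ℕ be a function such that for all vertices u, v there exist f(u,v) internally vertex-disjoint paths of length at least 2 connecting u and v. Then e(G) ≥ ⌈w(f)/(n−2)⌉, where w(f) is the sum of f(u,v) over all unordered pairs {u,v}. -/
open SimpleGraph Finset

variable {V : Type*}

/-- A graph is `k`-connected if it has at least `k+1` vertices and removing any
set of at most `k-1` vertices leaves it connected. -/
def KConnected [Fintype V] (G : SimpleGraph V) (k : ℕ) : Prop :=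
  k + 1 ≤ Fintype.card V ∧
    ∀ U : Finset V, U.card ≤ k - 1 → (G.induce ((↑U : Set V)ᶜ)).Connected

/-- Two walks from `u` to `v` are internally disjoint if they share only `u` and `v`. -/
def InternallyDisjoint {G : SimpleGraph V} {u v : V} (p q : G.Walk u v) : Prop :=
  ∀ x : V, x ∈ p.support → x ∈ q.support → x = u ∨ x = v

/-- A walk is monochromatic under an edge-colouring `c` if all its edges get one colour. -/
def Monochromatic {G : SimpleGraph V} (c : Sym2 V → ℕ) {u v : V} (p : G.Walk u v) : Prop :=
  ∃ col : ℕ, ∀ e ∈ p.edges, c e = col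

/-- There exist `m` pairwise internally disjoint super-paths (paths of length ≥ 2)
connecting `u` and `v`. -/
def HasDisjointSuperPaths (G : SimpleGraph V) (u v : V) (m : ℕ) : Prop :=
  ∃ P : Fin m → G.Walk u v,
    (∀ i, (P i).IsPath ∧ 2 ≤ (P i).length) ∧
    Pairwise (fun i j => InternallyDisjoint (P i) (P j))

/-- There exist `m` pairwise internally disjoint monochromatic super-paths
connecting `u` and `v`. -/
def HasDisjointMonoSuperPaths (G : SimpleGraph V) (c : Sym2 V → ℕ) (u v : V) (m : ℕ) : Prop :=
  ∃ P : Fin m → G.Walk u v,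
    (∀ i, (P i).IsPath ∧ 2 ≤ (P i).length ∧ Monochromatic c (P i)) ∧
    Pairwise (fun i j => InternallyDisjoint (P i) (P j))

/-- An edge-colouring is monochromatic `k`-connected if any two distinct vertices are
connected by `k` pairwise internally disjoint monochromatic paths. -/
def MonoKConnected (G : SimpleGraph V) (k : ℕ) (c : Sym2 V → ℕ) : Prop :=
  ∀ u v : V, u ≠ v → ∃ P : Fin k → G.Walk u v,
    (∀ i, (P i).IsPath ∧ Monochromatic c (P i)) ∧
    Pairwise (fun i j => InternallyDisjoint (P i) (P j))

/-- The monochromatic `k`-connection number: the maximum number of colours in a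
monochromatic `k`-connected edge-colouring. -/
noncomputable def mck (G : SimpleGraph V) (k : ℕ) : ℕ :=
  sSup {r : ℕ | ∃ c : Sym2 V → ℕ, MonoKConnected G k c ∧ (c '' G.edgeSet).ncard = r}

open Classical in
/-- `m_G(u,v)`: `min(deg u, deg v) - 1` if `uv` is an edge, `min(deg u, deg v)` otherwise. -/
noncomputable def mDeg (G : SimpleGraph V) (u v : V) : ℕ :=
  if G.Adj u v then min (G.neighborSet u).ncard (G.neighborSet v).ncard - 1
  else min (G.neighborSet u).ncard (G.neighborSet v).ncard

/-- Every super-path has a second vertex adjacent to `u`, internal to the path. -/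
lemma aux_second_vertex {G : SimpleGraph V} {u v : V} (p : G.Walk u v) (hp : p.IsPath)
    (hl : 2 ≤ p.length) : ∃ s, G.Adj u s ∧ s ∈ p.support ∧ s ≠ u ∧ s ≠ v := by
  cases p with
  | nil => simp at hl
  | @cons _ s _ h q =>
    refine ⟨s, h, by simp [Walk.support_cons, q.start_mem_support], fun hs => G.irrefl (hs ▸ h), ?_⟩
    rintro rfl
    have hq : q.IsPath := (SimpleGraph.Walk.cons_isPath_iff h q).mp hp |>.1
    have : q = Walk.nil := SimpleGraph.Walk.isPath_iff_eq_nil.mp hq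
    subst this
    simp [Walk.length_cons] at hl

lemma aux_count [Fintype V] [DecidableEq V] {G : SimpleGraph V} [DecidableRel G.Adj]
    {u v : V} (huv : u ≠ v) {m : ℕ}
    (h : HasDisjointSuperPaths G u v m) :
    m + (if G.Adj u v then 1 else 0) ≤ G.degree u := by
  obtain ⟨P, hP, hdisj⟩ := h
  choose s hadj hmem hsu hsv using fun i => aux_second_vertex (P i) (hP i).1 (hP i).2
  have hinj : Function.Injective s := by
    intro i j hij
    by_contra hne
    rcases hdisj hne (s i) (hmem i) (hij ▸ hmem j) with h1 | h1
    · exact hsu i h1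
    · exact hsv i h1
  have hmaps : ∀ i, s i ∈ (G.neighborFinset u).erase v := fun i =>
    Finset.mem_erase.mpr ⟨hsv i, (G.mem_neighborFinset u (s i)).mpr (hadj i)⟩
  have hcard : m ≤ ((G.neighborFinset u).erase v).card := by
    have := Finset.card_le_card_of_injOn (s := Finset.univ) s (fun i _ => hmaps i)
      hinj.injOn
    simpa using this
  by_cases hadjuv : G.Adj u v
  · rw [if_pos hadjuv]
    have hv : v ∈ G.neighborFinset u := (G.mem_neighborFinset u v).mpr hadjuv
    rw [Finset.card_erase_of_mem hv] at hcard
    have hdeg : 1 ≤ (G.neighborFinset u).card := Finset.card_pos.mpr ⟨v, hv⟩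
    have : G.degree u = (G.neighborFinset u).card := rfl
    omega
  · rw [if_neg hadjuv]
    calc m ≤ ((G.neighborFinset u).erase v).card := hcard
      _ ≤ (G.neighborFinset u).card := Finset.card_erase_le
      _ = G.degree u := rfl

lemma aux_sym2_double [Fintype V] [DecidableEq V] (f : Sym2 V → ℕ) :
    ∑ p ∈ (Finset.univ : Finset V).offDiag, f s(p.1, p.2)
      = 2 * ∑ e ∈ Finset.univ.filter (fun e : Sym2 V => ¬ e.IsDiag), f e := by
  have hmaps : ∀ p ∈ (Finset.univ : Finset V).offDiag,
      s(p.1, p.2) ∈ Finset.univ.filter (fun e : Sym2 V => ¬ e.IsDiag) := by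
    intro p hp
    simp only [Finset.mem_filter, Finset.mem_univ, true_and, Sym2.isDiag_iff_proj_eq]
    exact (Finset.mem_offDiag.mp hp).2.2
  rw [← Finset.sum_fiberwise_of_maps_to' (g := fun p : V × V => s(p.1, p.2)) hmaps f]
  rw [Finset.mul_sum]
  apply Finset.sum_congr rfl
  intro e he
  obtain ⟨a, b⟩ := e
  have hab : a ≠ b := by
    simpa [Sym2.isDiag_iff_proj_eq] using (Finset.mem_filter.mp he).2
  have hfib : ((Finset.univ : Finset V).offDiag.filter
      (fun p : V × V => s(p.1, p.2) = s(a, b))) = {(a, b), (b, a)} := by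
    ext ⟨x, y⟩
    simp only [Finset.mem_filter, Finset.mem_offDiag, Finset.mem_univ, true_and,
      Sym2.eq_iff, Finset.mem_insert, Finset.mem_singleton, Prod.mk.injEq]
    constructor
    · rintro ⟨-, (⟨rfl, rfl⟩ | ⟨rfl, rfl⟩)⟩
      · exact Or.inl ⟨rfl, rfl⟩
      · exact Or.inr ⟨rfl, rfl⟩
    · rintro (⟨rfl, rfl⟩ | ⟨rfl, rfl⟩)
      · exact ⟨hab, Or.inl ⟨rfl, rfl⟩⟩
      · exact ⟨hab.symm, Or.inr ⟨rfl, rfl⟩⟩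
  rw [hfib, Finset.sum_const]
  have : ((a, b) : V × V) ≠ (b, a) := by
    simp only [ne_eq, Prod.mk.injEq, not_and]
    intro h; exact absurd h hab
  rw [Finset.card_pair this, smul_eq_mul]

theorem stmt1 [Fintype V] [DecidableEq V] (G : SimpleGraph V) (hn : 3 ≤ Fintype.card V)
    (f : Sym2 V → ℕ)
    (hf : ∀ u v : V, u ≠ v → HasDisjointSuperPaths G u v (f s(u, v))) :
    ⌈((∑ e ∈ Finset.univ.filter (fun e : Sym2 V => ¬ e.IsDiag), f e : ℕ) : ℚ) /
        ((Fintype.card V : ℚ) - 2)⌉ ≤ (G.edgeSet.ncard : ℤ) := by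
  classical
  set n := Fintype.card V with hn'
  set W : ℕ := ∑ e ∈ Finset.univ.filter (fun e : Sym2 V => ¬ e.IsDiag), f e with hW
  set E : ℕ := G.edgeFinset.card with hE
  have hedge : G.edgeSet.ncard = E := by
    rw [← SimpleGraph.coe_edgeFinset, Set.ncard_coe_finset]
  -- pointwise bound summed over the off-diagonal
  have hptwise : ∀ p ∈ (Finset.univ : Finset V).offDiag,
      f s(p.1, p.2) + (if G.Adj p.1 p.2 then 1 else 0) ≤ G.degree p.1 := by
    intro p hp
    have hne : p.1 ≠ p.2 := (Finset.mem_offDiag.mp hp).2.2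
    exact aux_count hne (hf p.1 p.2 hne)
  have hsum : ∑ p ∈ (Finset.univ : Finset V).offDiag,
        (f s(p.1, p.2) + (if G.Adj p.1 p.2 then 1 else 0))
      ≤ ∑ p ∈ (Finset.univ : Finset V).offDiag, G.degree p.1 :=
    Finset.sum_le_sum hptwise
  -- compute the three sums
  have hsplit : ∑ p ∈ (Finset.univ : Finset V).offDiag,
        (f s(p.1, p.2) + (if G.Adj p.1 p.2 then 1 else 0))
      = 2 * W + ∑ p ∈ (Finset.univ : Finset V).offDiag, (if G.Adj p.1 p.2 then 1 else 0) := by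
    rw [Finset.sum_add_distrib, aux_sym2_double]
  have hadjsum : ∑ p ∈ (Finset.univ : Finset V).offDiag, (if G.Adj p.1 p.2 then 1 else 0)
      = 2 * E := by
    have h1 : ∑ p ∈ (Finset.univ : Finset V).offDiag, (if G.Adj p.1 p.2 then 1 else 0)
        = ∑ p ∈ (Finset.univ ×ˢ Finset.univ : Finset (V × V)),
            (if G.Adj p.1 p.2 then 1 else 0) := by
      rw [show (Finset.univ : Finset V).offDiag = (Finset.univ ×ˢ Finset.univ).filter (fun p : V × V => p.1 ≠ p.2) from by ext; simp]
      rw [Finset.sum_filter_of_ne]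
      intro p _ hval
      have ha : G.Adj p.1 p.2 := by by_contra hc; simp [hc] at hval
      exact ha.ne
    rw [h1, Finset.sum_product]
    have h2 : ∀ u : V, ∑ v : V, (if G.Adj u v then 1 else 0) = G.degree u := by
      intro u
      have hnb : G.neighborFinset u = Finset.univ.filter (fun v => G.Adj u v) := by
        ext v; simp
      rw [← SimpleGraph.card_neighborFinset_eq_degree, hnb, Finset.card_filter]
    simp_rw [h2]
    exact G.sum_degrees_eq_twice_card_edges
  have hdegsum : ∑ p ∈ (Finset.univ : Finset V).offDiag, G.degree p.1
      ≤ (n - 1) * (2 * E) := by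
    have h1 : ∑ p ∈ (Finset.univ : Finset V).offDiag, G.degree p.1
        + ∑ u : V, G.degree u
        = ∑ p ∈ (Finset.univ ×ˢ Finset.univ : Finset (V × V)), G.degree p.1 := by
      rw [show (Finset.univ : Finset V).offDiag = (Finset.univ ×ˢ Finset.univ).filter (fun p : V × V => p.1 ≠ p.2) from by ext; simp]
      rw [← Finset.sum_filter_add_sum_filter_not
        ((Finset.univ ×ˢ Finset.univ : Finset (V × V))) (fun p : V × V => p.1 ≠ p.2)
        (fun p => G.degree p.1)]
      congr 1
      · rw [Finset.sum_filter]
        simp only [not_ne_iff]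
        rw [Finset.sum_product]
        simp [Finset.sum_ite_eq']
    have h2 : ∑ p ∈ (Finset.univ ×ˢ Finset.univ : Finset (V × V)), G.degree p.1
        = n * (2 * E) := by
      rw [Finset.sum_product]
      simp only [Finset.sum_const, Finset.card_univ, smul_eq_mul]
      show ∑ x : V, ∑ _y : V, G.degree x = _
      rw [Finset.sum_comm, Finset.sum_const, Finset.card_univ, smul_eq_mul, G.sum_degrees_eq_twice_card_edges]
    have h3 : ∑ u : V, G.degree u = 2 * E := G.sum_degrees_eq_twice_card_edges
    have hn1 : 1 ≤ n := by omega
    have : (n - 1) * (2 * E) + 2 * E = n * (2 * E) := by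
      have h4 : (n - 1) * (2 * E) + 2 * E = ((n - 1) + 1) * (2 * E) := by ring
      rw [h4, Nat.sub_add_cancel hn1]
    omega
  -- combine: 2W + 2E ≤ (n-1) * 2E
  have hkey : 2 * W + 2 * E ≤ (n - 1) * (2 * E) := by
    rw [hsplit, hadjsum] at hsum
    omega
  -- conclude in ℚ / ℤ
  rw [hedge]
  rw [Int.ceil_le]
  push_cast
  rw [div_le_iff₀ (by push_cast; linarith [show (3:ℚ) ≤ (n:ℚ) by exact_mod_cast hn] : (0:ℚ) < (n:ℚ) - 2)]
  have hn1 : 1 ≤ n := by omega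
  have hcast : ((n - 1 : ℕ) : ℚ) = (n:ℚ) - 1 := by push_cast [hn1]; ring
  have hkeyQ : 2 * (W:ℚ) + 2 * (E:ℚ) ≤ ((n:ℚ) - 1) * (2 * (E:ℚ)) := by
    calc 2 * (W:ℚ) + 2 * (E:ℚ) ≤ ((n-1:ℕ):ℚ) * (2 * (E:ℚ)) := by exact_mod_cast hkey
      _ = ((n:ℚ) - 1) * (2 * (E:ℚ)) := by rw [hcast]
  linarith
end

section
/- Let G be a graph on n vertices with degree sequence d_1 ≤ d_2 ≤ ⋯ ≤ d_n, and define m_G(u,v) = min(deg(u),deg(v)) − 1 if uv is an edge and min(deg(u),deg(v)) otherwise. Then 2·Σ_{ {u,v} } m_G(u,v) = 2(n−2)e(G) − Σ_{i=1}^{⌊n/2⌋} (n−2i+1)(d_{n+1−i} − d_i). -/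
open SimpleGraph Finset

variable {V : Type*}

section Helpers
open Finset

private lemma pair_sum' (n : ℕ) (g : ℕ → ℤ) (hg : ∀ j, 2 * j + 1 = n → g j = 0) :
    ∑ j ∈ range n, g j = ∑ i ∈ range (n / 2), (g i + g (n - 1 - i)) := by
  rw [Finset.sum_add_distrib]
  have hrefl : ∑ i ∈ range (n / 2), g (n - 1 - i) = ∑ j ∈ Ico (n - n / 2) n, g j := by
    apply Finset.sum_nbij' (fun i => n - 1 - i) (fun j => n - 1 - j)
    · intro i hi
      simp only [mem_range] at hi
      simp only [mem_Ico]
      omega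
    · intro j hj
      simp only [mem_Ico] at hj
      simp only [mem_range]
      omega
    · intro i hi; simp only [mem_range] at hi; omega
    · intro j hj; simp only [mem_Ico] at hj; omega
    · intro i hi; rfl
  rw [hrefl]
  have h1 := Finset.sum_Ico_consecutive g (Nat.zero_le (n/2)) (Nat.div_le_self n 2)
  rw [← Finset.range_eq_Ico, ← Finset.range_eq_Ico] at h1
  rw [← h1]
  congr 1
  rcases Nat.even_or_odd n with he | ho
  · obtain ⟨k, hk⟩ := he
    have : n - n / 2 = n / 2 := by omega
    rw [this]
  · obtain ⟨k, hk⟩ := ho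
    have h2 : n - n / 2 = n / 2 + 1 := by omega
    have h3 := Finset.sum_eq_sum_Ico_succ_bot (show n/2 < n by omega) g
    rw [h3, h2, hg (n/2) (by omega), zero_add]

private lemma arith' (n : ℕ) (d : ℕ → ℕ)
    (hmono : ∀ i j : ℕ, i ≤ j → j < n → d i ≤ d j) :
    2 * ∑ i ∈ range n, (n - 1 - i) * d i
      + ∑ i ∈ range (n / 2), (n - 2 * (i + 1) + 1) * (d (n - (i + 1)) - d i)
      = (n - 1) * ∑ i ∈ range n, d i := by
  rcases Nat.eq_zero_or_pos n with rfl | hn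
  · simp
  have key := pair_sum' n (fun j => ((2 * j : ℤ) - n + 1) * d j) (by
    intro j hj
    have : (2 * j : ℤ) - n + 1 = 0 := by push_cast [← hj]; ring
    rw [this, zero_mul])
  apply Nat.cast_injective (R := ℤ)
  push_cast
  have e1 : ∀ i ∈ range n, ((n - 1 - i : ℕ) : ℤ) * d i = ((n : ℤ) - 1 - i) * d i := by
    intro i hi; simp only [mem_range] at hi
    congr 1; omega
  have e2 : ∀ i ∈ range (n / 2),
      (((n - 2 * (i + 1) : ℕ) : ℤ) + 1) * ((d (n - (i + 1)) - d i : ℕ) : ℤ)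
        = ((2 * i : ℤ) - n + 1) * d i + ((2 * (n - 1 - i : ℕ) : ℤ) - n + 1) * d (n - 1 - i) := by
    intro i hi; simp only [mem_range] at hi
    have h1 : 2 * (i + 1) ≤ n := by omega
    have h3 : n - (i + 1) = n - 1 - i := by omega
    have h2 : d i ≤ d (n - (i + 1)) := hmono i (n - (i+1)) (by omega) (by omega)
    have ha : ((n - 2 * (i + 1) : ℕ) : ℤ) = (n : ℤ) - 2 * i - 2 := by omega
    have hb : ((d (n - (i + 1)) - d i : ℕ) : ℤ) = (d (n - (i+1)) : ℤ) - d i :=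
      Nat.cast_sub h2
    have h4 : ((n - 1 - i : ℕ) : ℤ) = (n : ℤ) - 1 - i := by omega
    rw [ha, hb, h3, h4]; ring
  rw [Finset.sum_congr rfl e1, Finset.sum_congr rfl e2, ← key]
  have hc : ((n - 1 : ℕ) : ℤ) = (n : ℤ) - 1 := by omega
  rw [hc, Finset.mul_sum, Finset.mul_sum, ← Finset.sum_add_distrib]
  apply Finset.sum_congr rfl
  intro x hx
  ring

private lemma sum_min' (n : ℕ) (d : ℕ → ℕ)
    (hmono : ∀ i j : ℕ, i ≤ j → j < n → d i ≤ d j) :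
    ∑ i ∈ range n, ∑ j ∈ range n, (if i ≠ j then min (d i) (d j) else 0)
      = 2 * ∑ i ∈ range n, (n - 1 - i) * d i := by
  have step : ∀ i ∈ range n, ∀ j ∈ range n,
      (if i ≠ j then min (d i) (d j) else 0)
        = (if j < i then d j else 0) + (if i < j then d i else 0) := by
    intro i hi j hj
    simp only [mem_range] at hi hj
    rcases lt_trichotomy i j with h | rfl | h
    · rw [if_pos h.ne, if_neg (by omega), if_pos h, zero_add,
        min_eq_left (hmono i j h.le hj)]
    · simp
    · rw [if_pos h.ne', if_pos h, if_neg (by omega), add_zero,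
        min_eq_right (hmono j i h.le hi)]
  have hsplit : ∑ i ∈ range n, ∑ j ∈ range n, (if i ≠ j then min (d i) (d j) else 0)
      = (∑ i ∈ range n, ∑ j ∈ range n, if j < i then d j else 0)
        + ∑ i ∈ range n, ∑ j ∈ range n, if i < j then d i else 0 := by
    rw [← Finset.sum_add_distrib]
    apply Finset.sum_congr rfl
    intro i hi
    rw [← Finset.sum_add_distrib]
    exact Finset.sum_congr rfl fun j hj => step i hi j hj
  rw [hsplit]
  have hswap : (∑ i ∈ range n, ∑ j ∈ range n, if j < i then d j else 0)
      = ∑ i ∈ range n, ∑ j ∈ range n, if i < j then d i else 0 := by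
    rw [Finset.sum_comm]
  rw [hswap, ← two_mul]
  congr 1
  apply Finset.sum_congr rfl
  intro i hi
  simp only [mem_range] at hi
  rw [← Finset.sum_filter]
  have : (range n).filter (fun j => i < j) = Ico (i+1) n := by
    ext j; simp only [Finset.mem_filter, Finset.mem_range, Finset.mem_Ico]; omega
  rw [this, Finset.sum_const, Nat.card_Ico, smul_eq_mul]
  congr 1
  omega

end Helpers

theorem stmt4 [Fintype V] [DecidableEq V] (G : SimpleGraph V) (n : ℕ)
    (hn : n = Fintype.card V) (d : ℕ → ℕ)
    (hmono : ∀ i j : ℕ, i ≤ j → j < n → d i ≤ d j)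
    (σ : V ≃ Fin n) (hd : ∀ v : V, (G.neighborSet v).ncard = d (σ v)) :
    (∑ p ∈ Finset.univ.offDiag, mDeg G p.1 p.2)
        + ∑ i ∈ Finset.range (n / 2), (n - 2 * (i + 1) + 1) * (d (n - (i + 1)) - d i)
      = 2 * (n - 2) * G.edgeSet.ncard := by
  classical
  have hdeg : ∀ v : V, (G.neighborSet v).ncard = G.degree v := by
    intro v
    rw [Set.ncard_eq_toFinset_card']
    rfl
  have hE : G.edgeSet.ncard = #G.edgeFinset := by
    rw [Set.ncard_eq_toFinset_card']
    exact congrArg Finset.card (Set.toFinset_congr rfl)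
  have hSd : ∑ i ∈ Finset.range n, d i = 2 * #G.edgeFinset := by
    rw [← Fin.sum_univ_eq_sum_range, ← Equiv.sum_comp σ (fun i => d i)]
    simp only [← hd, hdeg]
    exact G.sum_degrees_eq_twice_card_edges
  -- step 1
  have h1 : (∑ p ∈ (Finset.univ : Finset V).offDiag, mDeg G p.1 p.2)
        + 2 * #G.edgeFinset
      = ∑ p ∈ (Finset.univ : Finset V).offDiag, min (d (σ p.1)) (d (σ p.2)) := by
    have hterm : ∀ p ∈ (Finset.univ : Finset V).offDiag,
        mDeg G p.1 p.2 + (if G.Adj p.1 p.2 then 1 else 0)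
          = min (d (σ p.1)) (d (σ p.2)) := by
      intro p hp
      by_cases h : G.Adj p.1 p.2
      · have h1' : 1 ≤ (G.neighborSet p.1).ncard := by
          have hm : p.2 ∈ G.neighborSet p.1 := h
          have := Set.ncard_pos (Set.toFinite _) |>.mpr ⟨p.2, hm⟩
          omega
        have h2' : 1 ≤ (G.neighborSet p.2).ncard := by
          have hm : p.1 ∈ G.neighborSet p.2 := h.symm
          have := Set.ncard_pos (Set.toFinite _) |>.mpr ⟨p.1, hm⟩
          omega
        simp only [mDeg, if_pos h]
        rw [← hd, ← hd]
        omega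
      · simp only [mDeg, if_neg h, hd, add_zero]
    rw [← Finset.sum_congr rfl hterm, Finset.sum_add_distrib]
    congr 1
    have hsub : (∑ p ∈ (Finset.univ : Finset V).offDiag,
          if G.Adj p.1 p.2 then 1 else 0)
        = ∑ p ∈ (Finset.univ : Finset V) ×ˢ (Finset.univ : Finset V),
            (if G.Adj p.1 p.2 then 1 else 0) := by
      apply Finset.sum_subset
        (fun p hp => Finset.mem_product.mpr
          ⟨(Finset.mem_offDiag.mp hp).1, (Finset.mem_offDiag.mp hp).2.1⟩)
      intro p hp hnp
      rw [Finset.mem_product] at hp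
      have hpp : p.1 = p.2 := by
        by_contra hne
        exact hnp (Finset.mem_offDiag.mpr ⟨hp.1, hp.2, hne⟩)
      rw [if_neg (by rw [hpp]; exact G.irrefl)]
    rw [hsub, Finset.sum_product]
    have hdd : ∀ u : V, (∑ v : V, if G.Adj u v then 1 else 0) = G.degree u := by
      intro u
      rw [← Finset.sum_filter, Finset.sum_const, smul_eq_mul, mul_one]
      rw [SimpleGraph.degree, SimpleGraph.neighborFinset_eq_filter]
    rw [Finset.sum_congr rfl fun u _ => hdd u, G.sum_degrees_eq_twice_card_edges]
  -- step 2 : transfer to range n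
  have h2 : (∑ p ∈ (Finset.univ : Finset V).offDiag, min (d (σ p.1)) (d (σ p.2)))
      = ∑ i ∈ Finset.range n, ∑ j ∈ Finset.range n,
          (if i ≠ j then min (d i) (d j) else 0) := by
    have hA : (∑ p ∈ (Finset.univ : Finset V).offDiag,
          min (d (σ p.1)) (d (σ p.2)))
        = ∑ p ∈ (Finset.univ : Finset (Fin n)).offDiag,
            min (d p.1) (d p.2) := by
      apply Finset.sum_equiv (Equiv.prodCongr σ σ)
      · intro p
        simp [Finset.mem_offDiag]
      · intro p hp
        rfl
    rw [hA]
    have hB : (Finset.univ : Finset (Fin n)).offDiag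
        = ((Finset.univ : Finset (Fin n)) ×ˢ (Finset.univ : Finset (Fin n))).filter
            (fun p => p.1 ≠ p.2) := by
      ext p
      simp [Finset.mem_offDiag]
    rw [hB, Finset.sum_filter, Finset.sum_product]
    rw [← Fin.sum_univ_eq_sum_range
      (fun i => ∑ j ∈ Finset.range n, (if i ≠ j then min (d i) (d j) else 0))]
    apply Finset.sum_congr rfl
    intro i _
    rw [← Fin.sum_univ_eq_sum_range (fun j => (if (i : ℕ) ≠ j then min (d i) (d j) else 0))]
    apply Finset.sum_congr rfl
    intro j _
    congr 1
    simp [Fin.val_inj, eq_iff_iff]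
  rw [h2, sum_min' n d hmono] at h1
  have h3 := arith' n d hmono
  rw [hE]
  -- combine
  set A := ∑ p ∈ (Finset.univ : Finset V).offDiag, mDeg G p.1 p.2 with hA
  set T := ∑ i ∈ Finset.range (n / 2), (n - 2 * (i + 1) + 1) * (d (n - (i + 1)) - d i)
  set M := ∑ i ∈ Finset.range n, (n - 1 - i) * d i
  set e := #G.edgeFinset
  rcases Nat.lt_or_ge n 2 with hsmall | hbig
  · have hM : M = 0 := Finset.sum_eq_zero fun x hx => by
      simp only [Finset.mem_range] at hx
      have hz : n - 1 - x = 0 := by omega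
      rw [hz, zero_mul]
    have hT : T = 0 := by
      have : n / 2 = 0 := by omega
      simp [T, this]
    have hA0 : A = 0 := by omega
    have he0 : e = 0 := by omega
    rw [hA0, hT, he0, Nat.mul_zero]
  · obtain ⟨k, rfl⟩ : ∃ k, n = k + 2 := ⟨n - 2, by omega⟩
    rw [hSd] at h3
    have h5 : (k + 2 - 1) * (2 * e) = 2 * (k * e) + 2 * e := by
      have : k + 2 - 1 = k + 1 := rfl
      rw [this]; ring
    have h6 : 2 * (k + 2 - 2) * e = 2 * (k * e) := by
      have : k + 2 - 2 = k := rfl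
      rw [this]; ring
    omega
end

section
/- The complete bipartite graph K_{k,k} satisfies mc_k(K_{k,k}) = 1: every monochromatic k-connected edge-colouring of K_{k,k} uses only one colour. -/
open SimpleGraph Finset

variable {V : Type*}

lemma exists_second {G : SimpleGraph V} {u v : V} (p : G.Walk u v) (h : u ≠ v) :
    ∃ w, G.Adj u w ∧ w ∈ p.support ∧ s(u, w) ∈ p.edges := by
  cases p with
  | nil => exact absurd rfl h
  | cons h' q => exact ⟨_, h', by simp, by simp⟩

lemma key_left {k : ℕ} {c : Sym2 (Fin k ⊕ Fin k) → ℕ}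
    (hc : MonoKConnected (completeBipartiteGraph (Fin k) (Fin k)) k c)
    {a b : Fin k} (hab : a ≠ b) (x : Fin k) :
    c s(Sum.inl a, Sum.inr x) = c s(Sum.inl b, Sum.inr x) := by
  obtain ⟨P, hP, hdisj⟩ := hc (Sum.inl a) (Sum.inl b) (by simp [hab])
  have h1 : ∀ i, ∃ y : Fin k, (Sum.inr y : Fin k ⊕ Fin k) ∈ (P i).support ∧
      s(Sum.inl a, Sum.inr y) ∈ (P i).edges := by
    intro i
    obtain ⟨w, hadj, hsupp, hedge⟩ := exists_second (P i) (by simp [hab])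
    obtain ⟨y, rfl⟩ : ∃ y, w = Sum.inr y := by
      rcases w with y|y
      · simp [completeBipartiteGraph_adj] at hadj
      · exact ⟨y, rfl⟩
    exact ⟨y, hsupp, hedge⟩
  have h2 : ∀ i, ∃ y : Fin k, (Sum.inr y : Fin k ⊕ Fin k) ∈ (P i).support ∧
      s(Sum.inl b, Sum.inr y) ∈ (P i).edges := by
    intro i
    obtain ⟨w, hadj, hsupp, hedge⟩ := exists_second (P i).reverse (by simp [hab.symm])
    obtain ⟨y, rfl⟩ : ∃ y, w = Sum.inr y := by
      rcases w with y|y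
      · simp [completeBipartiteGraph_adj] at hadj
      · exact ⟨y, rfl⟩
    refine ⟨y, by simpa using hsupp, by simpa using hedge⟩
  choose f hf1 hf2 using h1
  choose g hg1 hg2 using h2
  have finj : Function.Injective f := by
    intro i j he
    by_contra hij
    have h' := hf1 j
    rw [← he] at h'
    rcases hdisj hij (Sum.inr (f i)) (hf1 i) h' with h | h <;> simp at h
  have ginj : Function.Injective g := by
    intro i j he
    by_contra hij
    have h' := hg1 j
    rw [← he] at h'
    rcases hdisj hij (Sum.inr (g i)) (hg1 i) h' with h | h <;> simp at h
  obtain ⟨i, hi⟩ := (Finite.injective_iff_bijective.mp finj).2 x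
  obtain ⟨j, hj⟩ := (Finite.injective_iff_bijective.mp ginj).2 x
  have hij : i = j := by
    by_contra h
    have h' := hg1 j
    rw [hj, ← hi] at h'
    rcases hdisj h (Sum.inr (f i)) (hf1 i) h' with h'' | h'' <;> simp at h''
  subst hij
  obtain ⟨col, hcol⟩ := (hP i).2
  rw [← hi, hcol _ (hf2 i)]
  rw [← hi] at hj
  rw [← hj, hcol _ (hg2 i)]

lemma key_right {k : ℕ} {c : Sym2 (Fin k ⊕ Fin k) → ℕ}
    (hc : MonoKConnected (completeBipartiteGraph (Fin k) (Fin k)) k c)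
    {a b : Fin k} (hab : a ≠ b) (x : Fin k) :
    c s(Sum.inl x, Sum.inr a) = c s(Sum.inl x, Sum.inr b) := by
  obtain ⟨P, hP, hdisj⟩ := hc (Sum.inr a) (Sum.inr b) (by simp [hab])
  have h1 : ∀ i, ∃ y : Fin k, (Sum.inl y : Fin k ⊕ Fin k) ∈ (P i).support ∧
      s(Sum.inr a, Sum.inl y) ∈ (P i).edges := by
    intro i
    obtain ⟨w, hadj, hsupp, hedge⟩ := exists_second (P i) (by simp [hab])
    obtain ⟨y, rfl⟩ : ∃ y, w = Sum.inl y := by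
      rcases w with y|y
      · exact ⟨y, rfl⟩
      · simp [completeBipartiteGraph_adj] at hadj
    exact ⟨y, hsupp, hedge⟩
  have h2 : ∀ i, ∃ y : Fin k, (Sum.inl y : Fin k ⊕ Fin k) ∈ (P i).support ∧
      s(Sum.inr b, Sum.inl y) ∈ (P i).edges := by
    intro i
    obtain ⟨w, hadj, hsupp, hedge⟩ := exists_second (P i).reverse (by simp [hab.symm])
    obtain ⟨y, rfl⟩ : ∃ y, w = Sum.inl y := by
      rcases w with y|y
      · exact ⟨y, rfl⟩
      · simp [completeBipartiteGraph_adj] at hadj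
    refine ⟨y, by simpa using hsupp, by simpa using hedge⟩
  choose f hf1 hf2 using h1
  choose g hg1 hg2 using h2
  have finj : Function.Injective f := by
    intro i j he
    by_contra hij
    have h' := hf1 j
    rw [← he] at h'
    rcases hdisj hij (Sum.inl (f i)) (hf1 i) h' with h | h <;> simp at h
  have ginj : Function.Injective g := by
    intro i j he
    by_contra hij
    have h' := hg1 j
    rw [← he] at h'
    rcases hdisj hij (Sum.inl (g i)) (hg1 i) h' with h | h <;> simp at h
  obtain ⟨i, hi⟩ := (Finite.injective_iff_bijective.mp finj).2 x
  obtain ⟨j, hj⟩ := (Finite.injective_iff_bijective.mp ginj).2 x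
  have hij : i = j := by
    by_contra h
    have h' := hg1 j
    rw [hj, ← hi] at h'
    rcases hdisj h (Sum.inl (f i)) (hf1 i) h' with h'' | h'' <;> simp at h''
  subst hij
  obtain ⟨col, hcol⟩ := (hP i).2
  have e1 := hcol _ (hf2 i)
  have e2 := hcol _ (hg2 i)
  rw [Sym2.eq_swap] at e1 e2
  rw [← hi, e1]
  rw [← hi] at hj
  rw [← hj, e2]

lemma const_on_edges {k : ℕ} {c : Sym2 (Fin k ⊕ Fin k) → ℕ}
    (hc : MonoKConnected (completeBipartiteGraph (Fin k) (Fin k)) k c)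
    {a b x y : Fin k} :
    c s(Sum.inl a, Sum.inr x) = c s(Sum.inl b, Sum.inr y) := by
  have step1 : c s(Sum.inl a, Sum.inr x) = c s(Sum.inl b, Sum.inr x) := by
    rcases eq_or_ne a b with rfl | h
    · rfl
    · exact key_left hc h x
  have step2 : c s(Sum.inl b, Sum.inr x) = c s(Sum.inl b, Sum.inr y) := by
    rcases eq_or_ne x y with rfl | h
    · rfl
    · exact key_right hc h b
  rw [step1, step2]

set_option maxHeartbeats 1000000 in
lemma cross_paths {k : ℕ} (hk : 2 ≤ k) (a b : Fin k) :
    ∃ P : Fin k → (completeBipartiteGraph (Fin k) (Fin k)).Walk (Sum.inl a) (Sum.inr b),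
      (∀ i, (P i).IsPath) ∧ Pairwise (fun i j => InternallyDisjoint (P i) (P j)) := by
  haveI : NeZero k := ⟨by omega⟩
  refine ⟨fun i => if i = 0 then Walk.cons (by simp) Walk.nil else
    Walk.cons (show (completeBipartiteGraph (Fin k) (Fin k)).Adj (Sum.inl a) (Sum.inr (b + i)) by simp)
      (Walk.cons (show (completeBipartiteGraph (Fin k) (Fin k)).Adj (Sum.inr (b + i)) (Sum.inl (a + i)) by simp)
        (Walk.cons (show (completeBipartiteGraph (Fin k) (Fin k)).Adj (Sum.inl (a + i)) (Sum.inr b) by simp) Walk.nil)),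
    ?_, ?_⟩
  · intro i
    dsimp only
    split_ifs with h
    · simp [Walk.isPath_def]
    · simp [Walk.isPath_def, h, add_eq_left, left_eq_add]
  · intro i j hij x hx hy
    dsimp only at hx hy
    split_ifs at hx hy with h1 h2 h2
    · exact absurd (h1.trans h2.symm) hij
    · simp only [Walk.support_cons, Walk.support_nil, List.mem_cons,
        List.not_mem_nil, or_false] at hx
      tauto
    · simp only [Walk.support_cons, Walk.support_nil, List.mem_cons,
        List.not_mem_nil, or_false] at hy
      tauto
    · simp only [Walk.support_cons, Walk.support_nil, List.mem_cons,
        List.not_mem_nil, or_false] at hx hy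
      have hbij : b + i ≠ b + j := fun hcon => hij (add_left_cancel hcon)
      have haij : a + i ≠ a + j := fun hcon => hij (add_left_cancel hcon)
      rcases hx with rfl|rfl|rfl|rfl <;> rcases hy with h|h|h|h <;> simp_all

set_option maxHeartbeats 1000000 in
lemma same_left_paths {k : ℕ} {a b : Fin k} (hab : a ≠ b) :
    ∃ P : Fin k → (completeBipartiteGraph (Fin k) (Fin k)).Walk (Sum.inl a) (Sum.inl b),
      (∀ i, (P i).IsPath) ∧ Pairwise (fun i j => InternallyDisjoint (P i) (P j)) := by
  refine ⟨fun i => Walk.cons (show (completeBipartiteGraph (Fin k) (Fin k)).Adj (Sum.inl a) (Sum.inr i) by simp)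
    (Walk.cons (show (completeBipartiteGraph (Fin k) (Fin k)).Adj (Sum.inr i) (Sum.inl b) by simp) Walk.nil), ?_, ?_⟩
  · intro i; dsimp only; simp [Walk.isPath_def, hab]
  · intro i j hij x hx hy
    dsimp only at hx hy
    simp only [Walk.support_cons, Walk.support_nil, List.mem_cons,
      List.not_mem_nil, or_false] at hx hy
    rcases hx with rfl|rfl|rfl <;> rcases hy with h|h|h <;> simp_all

set_option maxHeartbeats 1000000 in
lemma same_right_paths {k : ℕ} {a b : Fin k} (hab : a ≠ b) :
    ∃ P : Fin k → (completeBipartiteGraph (Fin k) (Fin k)).Walk (Sum.inr a) (Sum.inr b),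
      (∀ i, (P i).IsPath) ∧ Pairwise (fun i j => InternallyDisjoint (P i) (P j)) := by
  refine ⟨fun i => Walk.cons (show (completeBipartiteGraph (Fin k) (Fin k)).Adj (Sum.inr a) (Sum.inl i) by simp)
    (Walk.cons (show (completeBipartiteGraph (Fin k) (Fin k)).Adj (Sum.inl i) (Sum.inr b) by simp) Walk.nil), ?_, ?_⟩
  · intro i; dsimp only; simp [Walk.isPath_def, hab]
  · intro i j hij x hx hy
    dsimp only at hx hy
    simp only [Walk.support_cons, Walk.support_nil, List.mem_cons,
      List.not_mem_nil, or_false] at hx hy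
    rcases hx with rfl|rfl|rfl <;> rcases hy with h|h|h <;> simp_all

lemma const_mono {k : ℕ} (hk : 2 ≤ k) :
    MonoKConnected (completeBipartiteGraph (Fin k) (Fin k)) k (fun _ => 0) := by
  have rev : ∀ {u v : Fin k ⊕ Fin k},
      (∃ P : Fin k → (completeBipartiteGraph (Fin k) (Fin k)).Walk u v,
        (∀ i, (P i).IsPath) ∧ Pairwise (fun i j => InternallyDisjoint (P i) (P j))) →
      ∃ P : Fin k → (completeBipartiteGraph (Fin k) (Fin k)).Walk v u,
      (∀ i, (P i).IsPath) ∧ Pairwise (fun i j => InternallyDisjoint (P i) (P j)) := by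
    rintro u v ⟨P, h1, h2⟩
    exact ⟨fun i => (P i).reverse, fun i => (h1 i).reverse,
      fun i j hij x hx hy => ((h2 hij) x (by simpa using hx) (by simpa using hy)).symm⟩
  have conn : ∀ u v : Fin k ⊕ Fin k, u ≠ v →
      ∃ P : Fin k → (completeBipartiteGraph (Fin k) (Fin k)).Walk u v,
      (∀ i, (P i).IsPath) ∧ Pairwise (fun i j => InternallyDisjoint (P i) (P j)) := by
    rintro (a|a) (b|b) huv
    · exact same_left_paths (by simpa using huv)
    · exact cross_paths hk a b
    · exact rev (cross_paths hk b a)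
    · exact same_right_paths (by simpa using huv)
  intro u v huv
  obtain ⟨P, h1, h2⟩ := conn u v huv
  exact ⟨P, fun i => ⟨h1 i, ⟨0, fun _ _ => rfl⟩⟩, h2⟩

theorem stmt8 (k : ℕ) (hk : 2 ≤ k) :
    mck (completeBipartiteGraph (Fin k) (Fin k)) k = 1 := by
  haveI : NeZero k := ⟨by omega⟩
  have he₀ : s(Sum.inl (0:Fin k), Sum.inr (0:Fin k)) ∈
      (completeBipartiteGraph (Fin k) (Fin k)).edgeSet := by simp
  have hset : {r : ℕ | ∃ c : Sym2 (Fin k ⊕ Fin k) → ℕ,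
      MonoKConnected (completeBipartiteGraph (Fin k) (Fin k)) k c ∧
      (c '' (completeBipartiteGraph (Fin k) (Fin k)).edgeSet).ncard = r} = {1} := by
    ext r
    simp only [Set.mem_setOf_eq, Set.mem_singleton_iff]
    constructor
    · rintro ⟨c, hc, rfl⟩
      have himg : c '' (completeBipartiteGraph (Fin k) (Fin k)).edgeSet
          = {c s(Sum.inl (0:Fin k), Sum.inr (0:Fin k))} := by
        apply Set.Subset.antisymm
        · rintro _ ⟨e, he, rfl⟩
          simp only [Set.mem_singleton_iff]
          induction e using Sym2.ind with
          | _ p q =>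
            rw [SimpleGraph.mem_edgeSet] at he
            rcases p with a|a <;> rcases q with b|b
            · simp at he
            · exact const_on_edges hc
            · rw [show s(Sum.inr a, Sum.inl b) = s(Sum.inl b, Sum.inr a) from Sym2.eq_swap]
              exact const_on_edges hc
            · simp at he
        · rintro _ rfl
          exact ⟨_, he₀, rfl⟩
      rw [himg, Set.ncard_singleton]
    · rintro rfl
      refine ⟨fun _ => 0, const_mono hk, ?_⟩
      rw [Set.Nonempty.image_const ⟨_, he₀⟩ 0, Set.ncard_singleton]
  rw [mck, hset, csSup_singleton]
end

section
/- Let G be a graph on n ≥ 3 vertices with an edge-colouring using exactly r colours, and suppose f : (unordered pairs of vertices) → ℕ is such that any two vertices u, v are connected by f(u,v) internally vertex-disjoint monochromatic super-paths. Then e(G) ≥ ⌈w(f)/(n−2)⌉ + r − 1, where w(f) is the sum of f(u,v) over all unordered pairs. -/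
open SimpleGraph Finset

variable {V : Type*}

/-- colour class graph -/
def Hc (G : SimpleGraph V) (c : Sym2 V → ℕ) (col : ℕ) : SimpleGraph V where
  Adj a b := G.Adj a b ∧ c s(a, b) = col
  symm := by
    refine ⟨fun a b h => ?_⟩
    refine ⟨h.1.symm, ?_⟩
    rw [Sym2.eq_swap]
    exact h.2
  loopless := ⟨fun a h => G.ne_of_adj h.1 rfl⟩

lemma walk_snd_props {G : SimpleGraph V} {a w : V} (p : G.Walk a w) (hp : p.IsPath)
    (hl : 2 ≤ p.length) :
    G.Adj a (p.getVert 1) ∧ p.getVert 1 ≠ a ∧ p.getVert 1 ≠ w ∧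
      s(a, p.getVert 1) ∈ p.edges ∧ p.getVert 1 ∈ p.support := by
  cases p with
  | nil => simp at hl
  | cons h q =>
    rename_i x
    have hg : (SimpleGraph.Walk.cons h q).getVert 1 = x := by
      rw [SimpleGraph.Walk.getVert_cons_succ, SimpleGraph.Walk.getVert_zero]
    rw [hg]
    refine ⟨h, (G.ne_of_adj h).symm, ?_, by simp, by simp⟩
    intro hxw
    subst hxw
    have : q = SimpleGraph.Walk.nil := SimpleGraph.Walk.isPath_iff_eq_nil.mp hp.of_cons
    rw [this] at hl
    simp at hl

lemma reach_of_mono {G : SimpleGraph V} {c : Sym2 V → ℕ} {col : ℕ} {a w : V}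
    (p : G.Walk a w) (hmono : ∀ e ∈ p.edges, c e = col) : (Hc G c col).Reachable a w := by
  refine SimpleGraph.Walk.reachable (p.transfer (Hc G c col) ?_)
  intro e he
  induction e with
  | h y z =>
    rw [SimpleGraph.mem_edgeSet]
    exact ⟨p.edges_subset_edgeSet he, hmono _ he⟩

noncomputable def SYS (G : SimpleGraph V) (f : Sym2 V → ℕ) (ρ : V → ℕ)
    (P : ∀ a w : V, a ≠ w → Fin (f s(a, w)) → G.Walk a w)
    (a w : V) (h : a ≠ w) (i : Fin (f s(a, w))) : G.Walk a w :=
  if ρ a < ρ w then P a w h i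
  else ((P w a h.symm) (Fin.cast (congrArg f (Sym2.eq_swap)) i)).reverse

section SYSTEM

variable {G : SimpleGraph V} {c : Sym2 V → ℕ} {f : Sym2 V → ℕ}
  {ρ : V → ℕ} {P : ∀ a w : V, a ≠ w → Fin (f s(a, w)) → G.Walk a w}

lemma SYS_rev (hρ : ∀ {x y : V}, x ≠ y → ρ x ≠ ρ y) {a w : V} (h : a ≠ w)
    (j : Fin (f s(w, a))) :
    SYS G f ρ P w a h.symm j
      = (SYS G f ρ P a w h (Fin.cast (congrArg f (Sym2.eq_swap)) j)).reverse := by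
  rcases lt_trichotomy (ρ a) (ρ w) with hlt | heq | hgt
  · rw [SYS, SYS, if_neg (lt_asymm hlt), if_pos hlt]
  · exact absurd heq (hρ h)
  · rw [SYS, SYS, if_pos hgt, if_neg (lt_asymm hgt), SimpleGraph.Walk.reverse_reverse]
    exact congrArg _ (Fin.ext (by simp))

lemma SYS_isPath (hP : ∀ a w (h : a ≠ w) i, (P a w h i).IsPath ∧ 2 ≤ (P a w h i).length ∧
      Monochromatic c (P a w h i)) {a w : V} (h : a ≠ w) (i : Fin (f s(a, w))) :
    (SYS G f ρ P a w h i).IsPath ∧ 2 ≤ (SYS G f ρ P a w h i).length ∧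
      Monochromatic c (SYS G f ρ P a w h i) := by
  rw [SYS]
  split
  · exact hP a w h i
  · obtain ⟨h1, h2, col, h3⟩ := hP w a h.symm (Fin.cast (congrArg f (Sym2.eq_swap)) i)
    refine ⟨h1.reverse, by rwa [SimpleGraph.Walk.length_reverse], col, ?_⟩
    intro e he
    rw [SimpleGraph.Walk.edges_reverse, List.mem_reverse] at he
    exact h3 e he

lemma SYS_ID (hPD : ∀ a w (h : a ≠ w), Pairwise fun i j =>
      InternallyDisjoint (P a w h i) (P a w h j)) {a w : V} (h : a ≠ w)
    {i j : Fin (f s(a, w))} (hij : i ≠ j) :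
    InternallyDisjoint (SYS G f ρ P a w h i) (SYS G f ρ P a w h j) := by
  rw [SYS, SYS]
  split
  · exact hPD a w h hij
  · intro x hx hy
    rw [SimpleGraph.Walk.support_reverse, List.mem_reverse] at hx hy
    have := hPD w a h.symm (i := Fin.cast (congrArg f (Sym2.eq_swap)) i)
      (j := Fin.cast (congrArg f (Sym2.eq_swap)) j)
      (by simpa [Fin.ext_iff] using (by simpa [Fin.ext_iff] using hij : (i:ℕ) ≠ j)) x hx hy
    tauto

end SYSTEM

section SYSTEM2

variable [Fintype V] [DecidableEq V] {G : SimpleGraph V} {c : Sym2 V → ℕ} {f : Sym2 V → ℕ}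
  {ρ : V → ℕ} {P : ∀ a w : V, a ≠ w → Fin (f s(a, w)) → G.Walk a w}

/-- the set of "second vertices" of the chosen path system from `a` to `w`. -/
noncomputable def tokS (G : SimpleGraph V) (f : Sym2 V → ℕ) (ρ : V → ℕ)
    (P : ∀ a w : V, a ≠ w → Fin (f s(a, w)) → G.Walk a w) (a w : V) : Finset V :=
  if h : a ≠ w then Finset.image (fun i => (SYS G f ρ P a w h i).getVert 1) Finset.univ
  else ∅

lemma mem_tokS {a x w : V} (h : a ≠ w) :
    x ∈ tokS G f ρ P a w ↔ ∃ i, (SYS G f ρ P a w h i).getVert 1 = x := by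
  rw [tokS, dif_pos h]
  simp

lemma snd_mem_support {a w : V} (p : G.Walk a w) (hl : 2 ≤ p.length) :
    p.getVert 1 ∈ p.support :=
  SimpleGraph.Walk.mem_support_iff_exists_getVert.mpr ⟨1, rfl, by omega⟩

variable (hP : ∀ a w (h : a ≠ w) i, (P a w h i).IsPath ∧ 2 ≤ (P a w h i).length ∧
      Monochromatic c (P a w h i))
    (hPD : ∀ a w (h : a ≠ w), Pairwise fun i j =>
      InternallyDisjoint (P a w h i) (P a w h j))
    (hρ : ∀ {x y : V}, x ≠ y → ρ x ≠ ρ y)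

include hP in
lemma tok_props {a x w : V} (h : a ≠ w) (ht : x ∈ tokS G f ρ P a w) :
    G.Adj a x ∧ x ≠ a ∧ x ≠ w ∧ (Hc G c (c s(a, x))).Reachable a w := by
  obtain ⟨i, hi⟩ := (mem_tokS h).mp ht
  obtain ⟨hpath, hlen, col, hmono⟩ := SYS_isPath hP h i
  obtain ⟨hadj, hxa, hxw, hedge, -⟩ := walk_snd_props _ hpath hlen
  subst hi
  have hcol : c s(a, (SYS G f ρ P a w h i).getVert 1) = col := hmono _ hedge
  refine ⟨hadj, hxa, hxw, ?_⟩
  rw [hcol]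
  exact reach_of_mono _ hmono

include hP hPD in
lemma tok_card {a w : V} (h : a ≠ w) :
    (tokS G f ρ P a w).card = f s(a, w) := by
  rw [tokS, dif_pos h, Finset.card_image_of_injective _ ?_, Finset.card_univ,
    Fintype.card_fin]
  intro i j hij
  by_contra hne
  obtain ⟨hpi, hli, -⟩ := SYS_isPath hP h i
  obtain ⟨hpj, hlj, -⟩ := SYS_isPath hP h j
  obtain ⟨-, hxa, hxw, -, -⟩ := walk_snd_props _ hpi hli
  have hm1 := snd_mem_support _ hli
  have hm2 := snd_mem_support _ hlj
  rw [show (SYS G f ρ P a w h j).getVert 1 = (SYS G f ρ P a w h i).getVert 1 from hij.symm]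
    at hm2
  rcases SYS_ID hPD h hne _ hm1 hm2 with h1 | h1
  · exact hxa h1
  · exact hxw h1

include hP hPD hρ in
lemma tok_colour_eq {a x w : V} (hne : a ≠ w) (h1 : x ∈ tokS G f ρ P a w)
    (h2 : x ∈ tokS G f ρ P w a) :
    c s(a, x) = c s(w, x) := by
  obtain ⟨i, hi⟩ := (mem_tokS hne).mp h1
  obtain ⟨j, hj⟩ := (mem_tokS hne.symm).mp h2
  rw [SYS_rev hρ hne.symm.symm] at hj
  set j' : Fin (f s(a, w)) := Fin.cast (congrArg f (Sym2.eq_swap)) j with hj'def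
  clear_value j'
  obtain ⟨hpi, hli, coli, hmonoi⟩ := SYS_isPath hP hne i
  obtain ⟨hpj, hlj, colj, hmonoj⟩ := SYS_isPath hP hne j'
  by_cases hij : i = j'
  · -- same path: x is second vertex and penultimate vertex
    subst hij
    obtain ⟨-, -, -, hedge1, -⟩ := walk_snd_props _ hpi hli
    obtain ⟨-, -, -, hedge2, -⟩ := walk_snd_props (SYS G f ρ P a w hne i).reverse hpi.reverse
      (by rwa [SimpleGraph.Walk.length_reverse])
    rw [hi] at hedge1
    rw [hj] at hedge2
    rw [SimpleGraph.Walk.edges_reverse, List.mem_reverse] at hedge2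
    rw [hmonoi _ hedge1, hmonoi _ hedge2]
  · -- different paths share internal vertex x : contradiction
    exfalso
    obtain ⟨-, hxa, hxw, -, -⟩ := walk_snd_props _ hpi hli
    rw [hi] at hxa hxw
    have hmem1 : x ∈ (SYS G f ρ P a w hne i).support := by
      rw [← hi]; exact snd_mem_support _ hli
    have hmem2 : x ∈ (SYS G f ρ P a w hne j').support := by
      have h3 : x ∈ (SYS G f ρ P a w hne j').reverse.support := by
        rw [← hj]
        exact snd_mem_support _ (by rwa [SimpleGraph.Walk.length_reverse])
      rwa [SimpleGraph.Walk.support_reverse, List.mem_reverse] at h3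
    rcases SYS_ID hPD hne hij _ hmem1 hmem2 with h1 | h1
    · exact hxa h1
    · exact hxw h1

end SYSTEM2

lemma reach_step {H : SimpleGraph V} {a₀ w : V} (hr : H.Reachable a₀ w) (hne : w ≠ a₀) :
    ∃ y, H.Adj y w ∧ H.Reachable a₀ y ∧ H.dist a₀ y < H.dist a₀ w := by
  obtain ⟨p, hp⟩ := hr.exists_walk_length_eq_dist
  obtain ⟨y, hadj, q, hq⟩ := SimpleGraph.Walk.exists_eq_cons_of_ne hne p.reverse
  refine ⟨y, hadj.symm, q.reverse.reachable, ?_⟩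
  have h1 : H.dist a₀ y ≤ q.length := by
    have := SimpleGraph.dist_le q.reverse
    rwa [SimpleGraph.Walk.length_reverse] at this
  have h2 : p.length = q.length + 1 := by
    have := congrArg SimpleGraph.Walk.length hq
    rwa [SimpleGraph.Walk.length_reverse, SimpleGraph.Walk.length_cons] at this
  omega

lemma two_mul_card_reach_le [Fintype V] [DecidableEq V] (H : SimpleGraph V) (a₀ : V)
    (C : Finset V) (hC : ∀ w ∈ C, H.Reachable a₀ w) (T : Finset (V × V))
    (hT : ∀ y w : V, H.Adj y w → H.Reachable a₀ y → (y, w) ∈ T) :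
    2 * C.card ≤ 2 + T.card := by
  classical
  set D := C.erase a₀ with hD
  have hcard : C.card ≤ D.card + 1 := by
    have : C ⊆ insert a₀ D := by
      intro z hz
      by_cases hza : z = a₀
      · simp [hza]
      · exact Finset.mem_insert_of_mem (Finset.mem_erase.mpr ⟨hza, hz⟩)
    calc C.card ≤ (insert a₀ D).card := Finset.card_le_card this
    _ ≤ D.card + 1 := Finset.card_insert_le _ _
  have hstep : ∀ w : V, ∃ y, w ∈ D →
      H.Adj y w ∧ H.Reachable a₀ y ∧ H.dist a₀ y < H.dist a₀ w := by
    intro w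
    by_cases hw : w ∈ D
    · obtain ⟨hne, hwC⟩ := Finset.mem_erase.mp hw
      obtain ⟨y, hy⟩ := reach_step (hC w hwC) hne
      exact ⟨y, fun _ => hy⟩
    · exact ⟨a₀, fun h => absurd h hw⟩
  choose y hy using hstep
  have hinj1 : Set.InjOn (fun w => ((y w, w) : V × V)) D := by
    intro w1 _ w2 _ h
    exact congrArg Prod.snd h
  have hinj2 : Set.InjOn (fun w => ((w, y w) : V × V)) D := by
    intro w1 _ w2 _ h
    exact congrArg Prod.fst h
  have hsub1 : D.image (fun w => ((y w, w) : V × V)) ⊆ T := by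
    intro p hp
    obtain ⟨w, hw, rfl⟩ := Finset.mem_image.mp hp
    obtain ⟨h1, h2, h3⟩ := hy w hw
    exact hT _ _ h1 h2
  have hsub2 : D.image (fun w => ((w, y w) : V × V)) ⊆ T := by
    intro p hp
    obtain ⟨w, hw, rfl⟩ := Finset.mem_image.mp hp
    obtain ⟨h1, h2, h3⟩ := hy w hw
    exact hT _ _ h1.symm ((hC w (Finset.mem_erase.mp hw).2))
  have hdisj : Disjoint (D.image (fun w => ((y w, w) : V × V)))
      (D.image (fun w => ((w, y w) : V × V))) := by
    rw [Finset.disjoint_left]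
    rintro p hp1 hp2
    obtain ⟨w1, hw1, he1⟩ := Finset.mem_image.mp hp1
    obtain ⟨w2, hw2, he2⟩ := Finset.mem_image.mp hp2
    obtain ⟨h11, h12, h13⟩ := hy w1 hw1
    obtain ⟨h21, h22, h23⟩ := hy w2 hw2
    have e1 : y w1 = w2 := by rw [← he2] at he1; exact congrArg Prod.fst he1
    have e2 : w1 = y w2 := by rw [← he2] at he1; exact congrArg Prod.snd he1
    rw [e1] at h13
    rw [← e2] at h23
    omega
  have hc1 : (D.image (fun w => ((y w, w) : V × V))).card = D.card :=
    Finset.card_image_of_injOn hinj1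
  have hc2 : (D.image (fun w => ((w, y w) : V × V))).card = D.card :=
    Finset.card_image_of_injOn hinj2
  have : D.card + D.card ≤ T.card := by
    have h := Finset.card_le_card (Finset.union_subset hsub1 hsub2)
    rw [Finset.card_union_of_disjoint hdisj, hc1, hc2] at h
    exact h
  omega

lemma card_ne_ne [Fintype V] [DecidableEq V] {a x : V} (h : a ≠ x) :
    (univ.filter (fun w => w ≠ a ∧ w ≠ x)).card = Fintype.card V - 2 := by
  have he : univ.filter (fun w => w ≠ a ∧ w ≠ x) = univ \ ({a, x} : Finset V) := by
    ext w
    simp only [mem_filter, mem_univ, true_and, mem_sdiff, Finset.mem_insert,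
      Finset.mem_singleton]
    tauto
  rw [he, Finset.card_sdiff_of_subset (Finset.subset_univ _), Finset.card_univ]
  congr 1
  rw [Finset.card_insert_of_notMem (by simpa using h), Finset.card_singleton]

lemma card_adjpairs [Fintype V] [DecidableEq V] (G : SimpleGraph V) [DecidableRel G.Adj] :
    (univ.filter fun p : V × V => G.Adj p.1 p.2).card = ∑ v, G.degree v := by
  rw [Finset.card_eq_sum_card_fiberwise
    (f := fun p : V × V => p.1) (t := univ) (fun p _ => mem_univ _)]
  refine Finset.sum_congr rfl fun v _ => ?_
  have he : (univ.filter fun p : V × V => G.Adj p.1 p.2).filter (fun p => p.1 = v)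
      = ({v} : Finset V) ×ˢ G.neighborFinset v := by
    ext p
    simp only [mem_filter, mem_univ, true_and, Finset.mem_product, Finset.mem_singleton,
      mem_neighborFinset]
    constructor
    · rintro ⟨h1, rfl⟩; exact ⟨rfl, h1⟩
    · rintro ⟨rfl, h2⟩; exact ⟨h2, rfl⟩
  rw [he, Finset.card_product, Finset.card_singleton, one_mul, SimpleGraph.degree]

lemma sum_offDiag_sym2 [Fintype V] [DecidableEq V] (g : Sym2 V → ℕ) :
    ∑ p ∈ univ.offDiag, g s(p.1, p.2)
      = 2 * ∑ q ∈ univ.filter (fun q : Sym2 V => ¬ q.IsDiag), g q := by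
  rw [← Finset.sum_fiberwise_of_maps_to
    (g := fun p : V × V => s(p.1, p.2)) (t := univ.filter (fun q : Sym2 V => ¬ q.IsDiag))
    (fun p hp => by
      simp only [mem_filter, mem_univ, true_and, Sym2.mk_isDiag_iff]
      exact (Finset.mem_offDiag.mp hp).2.2) (fun p : V × V => g s(p.1, p.2))]
  rw [Finset.mul_sum]
  refine Finset.sum_congr rfl fun q hq => ?_
  revert hq
  induction q using Sym2.ind with
  | _ u v =>
    intro hq
    have huv : u ≠ v := by
      simp only [mem_filter, mem_univ, true_and, Sym2.mk_isDiag_iff] at hq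
      exact hq
    have hfib : univ.offDiag.filter (fun p : V × V => s(p.1, p.2) = s(u, v))
        = ({(u, v), (v, u)} : Finset (V × V)) := by
      ext p
      simp only [mem_filter, Finset.mem_offDiag, mem_univ, true_and, Finset.mem_insert,
        Finset.mem_singleton, Sym2.eq_iff, Prod.ext_iff]
      constructor
      · rintro ⟨hne, (⟨rfl, rfl⟩ | ⟨rfl, rfl⟩)⟩
        · left; exact ⟨rfl, rfl⟩
        · right; exact ⟨rfl, rfl⟩
      · rintro (⟨h1, h2⟩ | ⟨h1, h2⟩)
        · subst h1; subst h2; exact ⟨huv, Or.inl ⟨rfl, rfl⟩⟩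
        · subst h1; subst h2; exact ⟨huv.symm, Or.inr ⟨rfl, rfl⟩⟩
    rw [hfib]
    rw [Finset.sum_insert (by simp only [Finset.mem_singleton, Prod.mk.injEq, not_and]; exact fun h _ => huv h),
      Finset.sum_singleton]
    have e1 : s((v, u).1, (v, u).2) = s(u, v) := Sym2.eq_swap
    have e2 : s((u, v).1, (u, v).2) = s(u, v) := rfl
    rw [e1, e2]
    omega

lemma card_triple12 [Fintype V] [DecidableEq V] (T' : Finset (V × V)) (W : V → V → Finset V) :
    (univ.filter (fun t : V × V × V => (t.1, t.2.1) ∈ T' ∧ t.2.2 ∈ W t.1 t.2.1)).card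
      = ∑ p ∈ T', (W p.1 p.2).card := by
  rw [Finset.card_eq_sum_card_fiberwise
    (f := fun t : V × V × V => (t.1, t.2.1)) (t := T')
    (fun t ht => (Finset.mem_filter.mp ht).2.1)]
  refine Finset.sum_congr rfl fun p hp => ?_
  refine Finset.card_bij' (fun t _ => t.2.2) (fun w _ => (p.1, p.2, w)) ?_ ?_ ?_ ?_
  · intro t ht
    obtain ⟨ht1, ht2⟩ := Finset.mem_filter.mp ht
    obtain ⟨-, hW⟩ := (Finset.mem_filter.mp ht1).2
    have h1 : t.1 = p.1 := (Prod.ext_iff.mp ht2).1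
    have h2 : t.2.1 = p.2 := (Prod.ext_iff.mp ht2).2
    rw [← h1, ← h2]
    exact hW
  · intro w hw
    refine Finset.mem_filter.mpr ⟨Finset.mem_filter.mpr ⟨Finset.mem_univ _, ?_, ?_⟩, rfl⟩
    · simpa using hp
    · simpa using hw
  · rintro ⟨a, x, w⟩ ht
    obtain ⟨-, ht2⟩ := Finset.mem_filter.mp ht
    subst ht2
    rfl
  · intro w hw
    rfl

lemma card_triple13 [Fintype V] [DecidableEq V] (T' : Finset (V × V)) (W : V → V → Finset V) :
    (univ.filter (fun t : V × V × V => (t.1, t.2.2) ∈ T' ∧ t.2.1 ∈ W t.1 t.2.2)).card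
      = ∑ p ∈ T', (W p.1 p.2).card := by
  rw [Finset.card_eq_sum_card_fiberwise
    (f := fun t : V × V × V => (t.1, t.2.2)) (t := T')
    (fun t ht => (Finset.mem_filter.mp ht).2.1)]
  refine Finset.sum_congr rfl fun p hp => ?_
  refine Finset.card_bij' (fun t _ => t.2.1) (fun x _ => (p.1, x, p.2)) ?_ ?_ ?_ ?_
  · intro t ht
    obtain ⟨ht1, ht2⟩ := Finset.mem_filter.mp ht
    obtain ⟨-, hW⟩ := (Finset.mem_filter.mp ht1).2
    have h1 : t.1 = p.1 := (Prod.ext_iff.mp ht2).1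
    have h2 : t.2.2 = p.2 := (Prod.ext_iff.mp ht2).2
    rw [← h1, ← h2]
    exact hW
  · intro x hx
    refine Finset.mem_filter.mpr ⟨Finset.mem_filter.mpr ⟨Finset.mem_univ _, ?_, ?_⟩, rfl⟩
    · simpa using hp
    · simpa using hx
  · rintro ⟨a, x, w⟩ ht
    obtain ⟨-, ht2⟩ := Finset.mem_filter.mp ht
    subst ht2
    rfl
  · intro x hx
    rfl

theorem main_count [Fintype V] [DecidableEq V] (G : SimpleGraph V)
    (hn : 3 ≤ Fintype.card V) (c : Sym2 V → ℕ) (f : Sym2 V → ℕ)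
    (hf : ∀ u v : V, u ≠ v → HasDisjointMonoSuperPaths G c u v (f s(u, v))) :
    (∑ q ∈ univ.filter (fun q : Sym2 V => ¬ q.IsDiag), f q)
        + (c '' G.edgeSet).ncard * (Fintype.card V - 2)
      ≤ (G.edgeSet.ncard + 1) * (Fintype.card V - 2) := by
  classical
  simp only [HasDisjointMonoSuperPaths] at hf
  choose P hP hPD using hf
  set n := Fintype.card V with hndef
  set M := n - 2 with hMdef
  set ρ : V → ℕ := fun v => ((Fintype.equivFin V) v : ℕ) with hρdef
  have hρ : ∀ {x y : V}, x ≠ y → ρ x ≠ ρ y := by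
    intro x y hxy hc
    exact hxy ((Fintype.equivFin V).injective (Fin.val_injective hc))
  have hP' : ∀ a w (h : a ≠ w) i, (P a w h i).IsPath ∧ 2 ≤ (P a w h i).length ∧
      Monochromatic c (P a w h i) := by
    intro a w h i
    exact ⟨(hP a w h i).1, (hP a w h i).2.1, (hP a w h i).2.2⟩
  set E := G.edgeFinset with hEdef
  have hecard : G.edgeSet.ncard = E.card := by
    rw [hEdef, ← SimpleGraph.coe_edgeFinset, Set.ncard_coe_finset]
  have hKcard : (c '' G.edgeSet).ncard = (E.image c).card := by
    rw [hEdef, ← SimpleGraph.coe_edgeFinset, ← Finset.coe_image, Set.ncard_coe_finset]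
  rw [hecard, hKcard]
  set K := E.image c with hKdef
  set A := K.filter (fun col => (Hc G c col).Connected) with hAdef
  set S := ∑ q ∈ univ.filter (fun q : Sym2 V => ¬ q.IsDiag), f q with hSdef
  set AP := univ.filter (fun p : V × V => G.Adj p.1 p.2) with hAPdef
  set TOK := univ.filter
    (fun t : V × V × V => (t.1, t.2.2) ∈ univ.offDiag ∧ t.2.1 ∈ tokS G f ρ P t.1 t.2.2)
    with hTOKdef
  set ALLT := univ.filter
    (fun t : V × V × V => (t.1, t.2.1) ∈ AP ∧
      t.2.2 ∈ univ.filter (fun w => w ≠ t.1 ∧ w ≠ t.2.1)) with hALLTdef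
  set DT := ALLT.filter
    (fun t : V × V × V => (Hc G c (c s(t.1, t.2.1))).Reachable t.1 t.2.2) with hDTdef
  set UT := ALLT.filter
    (fun t : V × V × V => ¬ (Hc G c (c s(t.1, t.2.1))).Reachable t.1 t.2.2) with hUTdef
  set HS := DT.filter
    (fun t : V × V × V => ((t.2.2, t.2.1, t.1) : V × V × V) ∈ DT ∧
      c s(t.1, t.2.1) ≠ c s(t.2.2, t.2.1)) with hHSdef
  -- Step A : TOK.card = 2 * S
  have hTOKcard : TOK.card = 2 * S := by
    rw [hTOKdef, card_triple13 univ.offDiag (fun a w => tokS G f ρ P a w), hSdef,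
      ← sum_offDiag_sym2]
    refine Finset.sum_congr rfl fun p hp => ?_
    exact tok_card hP' hPD (Finset.mem_offDiag.mp hp).2.2
  -- Step B : TOK ⊆ DT
  have hTOKsub : TOK ⊆ DT := by
    intro t ht
    obtain ⟨-, hoff, htok⟩ := Finset.mem_filter.mp ht
    have hne : t.1 ≠ t.2.2 := (Finset.mem_offDiag.mp hoff).2.2
    obtain ⟨hadj, hxa, hxw, hreach⟩ := tok_props hP' hne htok
    refine Finset.mem_filter.mpr ⟨Finset.mem_filter.mpr ⟨Finset.mem_univ _, ?_, ?_⟩, hreach⟩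
    · exact Finset.mem_filter.mpr ⟨Finset.mem_univ _, hadj⟩
    · exact Finset.mem_filter.mpr ⟨Finset.mem_univ _, hne.symm, hxw.symm⟩
  -- Step C : 2 * TOK.card + HS.card ≤ 2 * DT.card
  have hC : 2 * TOK.card + HS.card ≤ 2 * DT.card := by
    have hHSsub : HS ⊆ DT := Finset.filter_subset _ _
    have hkey : ∀ t ∈ HS ∩ TOK, ((t.2.2, t.2.1, t.1) : V × V × V) ∈ HS \ TOK := by
      intro t ht
      obtain ⟨htHS, htTOK⟩ := Finset.mem_inter.mp ht
      obtain ⟨htDT, hrevDT, hcne⟩ := Finset.mem_filter.mp htHS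
      obtain ⟨-, hoff, htok⟩ := Finset.mem_filter.mp htTOK
      have hne : t.1 ≠ t.2.2 := (Finset.mem_offDiag.mp hoff).2.2
      refine Finset.mem_sdiff.mpr ⟨Finset.mem_filter.mpr ⟨hrevDT, ?_, hcne.symm⟩, ?_⟩
      · exact htDT
      · intro hrevTOK
        obtain ⟨-, -, htok'⟩ := Finset.mem_filter.mp hrevTOK
        exact hcne (tok_colour_eq hP' hPD hρ hne htok htok')
    have h1 : (HS ∩ TOK).card ≤ (HS \ TOK).card := by
      refine Finset.card_le_card_of_injOn (fun t => (t.2.2, t.2.1, t.1)) hkey ?_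
      rintro ⟨a, x, w⟩ - ⟨a', x', w'⟩ - h
      obtain ⟨h1, h2, h3⟩ : w = w' ∧ x = x' ∧ a = a' := by
        simpa [Prod.ext_iff] using h
      simp [h1, h2, h3]
    have h2 : (HS \ TOK).card + (HS ∩ TOK).card = HS.card := Finset.card_sdiff_add_card_inter _ _
    have h3 : (TOK ∪ HS).card + (TOK ∩ HS).card = TOK.card + HS.card :=
      Finset.card_union_add_card_inter _ _
    have h4 : (TOK ∪ HS).card ≤ DT.card :=
      Finset.card_le_card (Finset.union_subset hTOKsub hHSsub)
    have h5 : (TOK ∩ HS).card = (HS ∩ TOK).card := by rw [Finset.inter_comm]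
    omega
  -- Step D : ALLT.card = 2 * E.card * M
  have hALLTcard : ALLT.card = 2 * E.card * M := by
    have h2 : AP.card = ∑ v, G.degree v := by
      rw [hAPdef]; exact card_adjpairs G
    have h3 : (∑ v, G.degree v) = 2 * E.card := by
      rw [hEdef]; exact SimpleGraph.sum_degrees_eq_twice_card_edges G
    rw [hALLTdef, card_triple12 AP (fun a x => univ.filter (fun w => w ≠ a ∧ w ≠ x))]
    have h1 : ∀ p ∈ AP, (univ.filter (fun w => w ≠ p.1 ∧ w ≠ p.2)).card = M := by
      intro p hp
      exact card_ne_ne (G.ne_of_adj (Finset.mem_filter.mp hp).2)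
    rw [Finset.sum_congr rfl h1, Finset.sum_const, smul_eq_mul, h2, h3]
  -- Step E : DT.card + UT.card = ALLT.card
  have hDU : DT.card + UT.card = ALLT.card := by
    rw [hDTdef, hUTdef]
    exact Finset.card_filter_add_card_filter_not _
  -- Step F : B-colour bound
  have hBbound : ∀ col ∈ K \ A, 2 * M ≤ (UT.filter fun t => c s(t.1, t.2.1) = col).card := by
    intro col hcol
    obtain ⟨hKcol, hnA⟩ := Finset.mem_sdiff.mp hcol
    have hnConn : ¬ (Hc G c col).Connected := by
      intro hconn
      exact hnA (Finset.mem_filter.mpr ⟨hKcol, hconn⟩)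
    obtain ⟨q, hqE, hqc⟩ := Finset.mem_image.mp hKcol
    revert hqE hqc
    induction q using Sym2.ind with
    | _ a₀ x₀ =>
    intro hqE hqc
    have hadj : G.Adj a₀ x₀ := SimpleGraph.mem_edgeFinset.mp hqE
    have hHadj : (Hc G c col).Adj a₀ x₀ := ⟨hadj, hqc⟩
    set C := univ.filter (fun w => (Hc G c col).Reachable a₀ w) with hCdef
    have ha₀C : a₀ ∈ C := Finset.mem_filter.mpr ⟨Finset.mem_univ _, Reachable.refl _⟩
    have hx₀C : x₀ ∈ C := Finset.mem_filter.mpr ⟨Finset.mem_univ _, hHadj.reachable⟩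
    have hC2 : 2 ≤ C.card := by
      have hsub : ({a₀, x₀} : Finset V) ⊆ C := by
        intro z hz
        rcases Finset.mem_insert.mp hz with rfl | hz
        · exact ha₀C
        · rw [Finset.mem_singleton.mp hz]; exact hx₀C
      have := Finset.card_le_card hsub
      rwa [Finset.card_insert_of_notMem (by simpa using G.ne_of_adj hadj),
        Finset.card_singleton] at this
    have hCn : C.card ≤ n - 1 := by
      by_contra hlt
      push_neg at hlt
      have hCuniv : C = univ := by
        apply Finset.eq_univ_of_card
        have := Finset.card_le_card (Finset.subset_univ C)
        rw [Finset.card_univ] at this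
        omega
      apply hnConn
      have hnonempty : Nonempty V := Fintype.card_pos_iff.mp (by omega)
      refine ⟨fun u v => ?_⟩
      have hu : u ∈ C := hCuniv ▸ Finset.mem_univ u
      have hv : v ∈ C := hCuniv ▸ Finset.mem_univ v
      exact ((Finset.mem_filter.mp hu).2).symm.trans (Finset.mem_filter.mp hv).2
    set T := univ.filter
      (fun p : V × V => (Hc G c col).Adj p.1 p.2 ∧ (Hc G c col).Reachable a₀ p.1) with hTdef
    have hT : 2 * C.card ≤ 2 + T.card := by
      refine two_mul_card_reach_le (Hc G c col) a₀ C
        (fun w hw => (Finset.mem_filter.mp hw).2) T ?_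
      intro y w hadj' hreach'
      exact Finset.mem_filter.mpr ⟨Finset.mem_univ _, hadj', hreach'⟩
    set Scol := univ.filter
      (fun t : V × V × V => (t.1, t.2.1) ∈ T ∧
        t.2.2 ∈ univ.filter (fun w => w ∉ C)) with hScoldef
    have hScolsub : Scol ⊆ UT.filter fun t => c s(t.1, t.2.1) = col := by
      rintro ⟨a, x, w⟩ ht
      obtain ⟨-, hpT, hwC⟩ := Finset.mem_filter.mp ht
      obtain ⟨-, ⟨hGadj, hcax⟩, hreach⟩ := Finset.mem_filter.mp hpT
      have hwC' : w ∉ C := (Finset.mem_filter.mp hwC).2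
      have haC : a ∈ C := Finset.mem_filter.mpr ⟨Finset.mem_univ _, hreach⟩
      have hxC : x ∈ C := Finset.mem_filter.mpr
        ⟨Finset.mem_univ _, hreach.trans (SimpleGraph.Adj.reachable ⟨hGadj, hcax⟩)⟩
      refine Finset.mem_filter.mpr ⟨Finset.mem_filter.mpr ⟨?_, ?_⟩, hcax⟩
      · refine Finset.mem_filter.mpr ⟨Finset.mem_univ _, ?_, ?_⟩
        · exact Finset.mem_filter.mpr ⟨Finset.mem_univ _, hGadj⟩
        · refine Finset.mem_filter.mpr ⟨Finset.mem_univ _, ?_, ?_⟩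
          · intro hwa
            have hwa' : w = a := hwa
            exact hwC' (hwa'.symm ▸ haC)
          · intro hwx
            have hwx' : w = x := hwx
            exact hwC' (hwx'.symm ▸ hxC)
      · rw [hcax]
        intro hreach'
        exact hwC' (Finset.mem_filter.mpr ⟨Finset.mem_univ _, hreach.trans hreach'⟩)
    have hScolcard : Scol.card = T.card * (n - C.card) := by
      rw [hScoldef, card_triple12 T (fun _ _ => univ.filter (fun w => w ∉ C))]
      have h1 : (univ.filter (fun w => w ∉ C)).card = n - C.card := by
        have he : univ.filter (fun w => w ∉ C) = univ \ C := by
          ext w; simp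
        rw [he, Finset.card_sdiff_of_subset (Finset.subset_univ _), Finset.card_univ]
      rw [Finset.sum_congr rfl (fun p _ => h1), Finset.sum_const, smul_eq_mul]
    have harith : 2 * M ≤ T.card * (n - C.card) := by
      have hk2 : 2 ≤ C.card := hC2
      have hkn : C.card ≤ n - 1 := hCn
      have hTC : 2 * C.card - 2 ≤ T.card := by omega
      have : 2 * M ≤ (2 * C.card - 2) * (n - C.card) := by
        have h3 : 3 ≤ n := hn
        have e1 : 2 ≤ 2 * C.card := by omega
        have e2 : C.card ≤ n := by omega
        rw [hMdef]
        zify [e1, e2, show 2 ≤ n by omega]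
        have h4 : (2 : ℤ) ≤ (C.card : ℤ) := by omega
        have h5 : (C.card : ℤ) ≤ (n : ℤ) - 1 := by omega
        nlinarith [mul_nonneg (show (0:ℤ) ≤ (C.card:ℤ) - 2 by omega)
          (show (0:ℤ) ≤ (n:ℤ) - 1 - (C.card:ℤ) by omega)]
      calc 2 * M ≤ (2 * C.card - 2) * (n - C.card) := this
      _ ≤ T.card * (n - C.card) := Nat.mul_le_mul_right _ hTC
    calc 2 * M ≤ T.card * (n - C.card) := harith
    _ = Scol.card := hScolcard.symm
    _ ≤ _ := Finset.card_le_card hScolsub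
  -- Step F' : sum over B-colours
  have hUTsum : (K \ A).card * (2 * M) ≤ UT.card := by
    have h1 := Finset.card_eq_sum_card_fiberwise
      (f := fun t : V × V × V => c s(t.1, t.2.1))
      (s := UT.filter (fun t => c s(t.1, t.2.1) ∈ K \ A)) (t := K \ A)
      (fun t ht => (Finset.mem_filter.mp ht).2)
    have h2 : ∀ col ∈ K \ A,
        (UT.filter (fun t => c s(t.1, t.2.1) ∈ K \ A)).filter
            (fun t => c s(t.1, t.2.1) = col)
          = UT.filter (fun t => c s(t.1, t.2.1) = col) := by
      intro col hcol
      ext t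
      simp only [Finset.mem_filter]
      constructor
      · rintro ⟨⟨ht1, -⟩, ht3⟩; exact ⟨ht1, ht3⟩
      · rintro ⟨ht1, ht3⟩; exact ⟨⟨ht1, ht3 ▸ hcol⟩, ht3⟩
    calc (K \ A).card * (2 * M) = ∑ _col ∈ K \ A, 2 * M := by
          rw [Finset.sum_const, smul_eq_mul]
      _ ≤ ∑ col ∈ K \ A, (UT.filter (fun t => c s(t.1, t.2.1) = col)).card :=
          Finset.sum_le_sum hBbound
      _ = ∑ col ∈ K \ A, ((UT.filter (fun t => c s(t.1, t.2.1) ∈ K \ A)).filter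
            (fun t => c s(t.1, t.2.1) = col)).card := by
          refine Finset.sum_congr rfl fun col hcol => ?_
          rw [h2 col hcol]
      _ = (UT.filter (fun t => c s(t.1, t.2.1) ∈ K \ A)).card := h1.symm
      _ ≤ UT.card := Finset.card_le_card (Finset.filter_subset _ _)
  -- Step G : A-colour neighbour existence
  have hAnbr : ∀ col ∈ A, ∀ x : V, ∃ y, G.Adj x y ∧ c s(x, y) = col := by
    intro col hcol x
    have hconn : (Hc G c col).Connected := (Finset.mem_filter.mp hcol).2
    obtain ⟨y, hy⟩ := Fintype.exists_ne_of_one_lt_card (by omega) x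
    obtain ⟨p⟩ := hconn.preconnected x y
    obtain ⟨z, hadj, q, -⟩ := SimpleGraph.Walk.exists_eq_cons_of_ne (Ne.symm hy) p
    exact ⟨z, hadj.1, hadj.2⟩
  -- Step H : A-part bound
  have hAbound : (A.card - 1) * (4 * M) ≤ HS.card := by
    rcases Nat.lt_or_ge A.card 2 with hA1 | hA2
    · have h0 : A.card - 1 = 0 := by omega
      rw [h0, zero_mul]
      exact Nat.zero_le _
    set APA := univ.filter (fun p : V × V => G.Adj p.1 p.2 ∧ c s(p.1, p.2) ∈ A) with hAPAdef
    set HA := univ.filter (fun t : V × V × V => (t.1, t.2.1) ∈ APA ∧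
      t.2.2 ∈ univ.filter (fun w => G.Adj w t.2.1 ∧ c s(w, t.2.1) ∈ A ∧
        c s(w, t.2.1) ≠ c s(t.1, t.2.1))) with hHAdef
    have hHAsub : HA ⊆ HS := by
      rintro ⟨a, x, w⟩ ht
      obtain ⟨-, hax, hw⟩ := Finset.mem_filter.mp ht
      obtain ⟨-, haxadj, haxA⟩ := Finset.mem_filter.mp hax
      obtain ⟨-, hwxadj, hwxA, hwxne⟩ := Finset.mem_filter.mp hw
      have hconn1 : (Hc G c (c s(a, x))).Connected := (Finset.mem_filter.mp haxA).2
      have hconn2 : (Hc G c (c s(w, x))).Connected := (Finset.mem_filter.mp hwxA).2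
      have hwa : w ≠ a := by
        intro h; rw [h] at hwxne; exact hwxne rfl
      have htDT : ((a, x, w) : V × V × V) ∈ DT := by
        refine Finset.mem_filter.mpr ⟨Finset.mem_filter.mpr ⟨Finset.mem_univ _, ?_, ?_⟩, ?_⟩
        · exact Finset.mem_filter.mpr ⟨Finset.mem_univ _, haxadj⟩
        · exact Finset.mem_filter.mpr ⟨Finset.mem_univ _, hwa, G.ne_of_adj hwxadj⟩
        · exact hconn1.preconnected a w
      have hrevDT : ((w, x, a) : V × V × V) ∈ DT := by
        refine Finset.mem_filter.mpr ⟨Finset.mem_filter.mpr ⟨Finset.mem_univ _, ?_, ?_⟩, ?_⟩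
        · exact Finset.mem_filter.mpr ⟨Finset.mem_univ _, hwxadj⟩
        · exact Finset.mem_filter.mpr ⟨Finset.mem_univ _, hwa.symm, G.ne_of_adj haxadj⟩
        · exact hconn2.preconnected w a
      exact Finset.mem_filter.mpr ⟨htDT, hrevDT, Ne.symm hwxne⟩
    have hHAcard : APA.card * (A.card - 1) ≤ HA.card := by
      rw [hHAdef, card_triple12 APA (fun a x => univ.filter (fun w => G.Adj w x ∧
        c s(w, x) ∈ A ∧ c s(w, x) ≠ c s(a, x)))]
      have h1 : ∀ p ∈ APA, A.card - 1 ≤ (univ.filter (fun w => G.Adj w p.2 ∧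
          c s(w, p.2) ∈ A ∧ c s(w, p.2) ≠ c s(p.1, p.2))).card := by
        intro p hp
        have hxA : ∀ col' : ℕ, ∃ yy : V, col' ∈ A.erase (c s(p.1, p.2)) →
            G.Adj p.2 yy ∧ c s(p.2, yy) = col' := by
          intro col'
          by_cases hcol' : col' ∈ A.erase (c s(p.1, p.2))
          · obtain ⟨yy, h1, h2⟩ := hAnbr col' (Finset.mem_of_mem_erase hcol') p.2
            exact ⟨yy, fun _ => ⟨h1, h2⟩⟩
          · exact ⟨p.2, fun h => absurd h hcol'⟩
        choose y hy using hxA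
        have hinj : Set.InjOn y (A.erase (c s(p.1, p.2))) := by
          intro c1 h1 c2 h2 he
          obtain ⟨-, hc1⟩ := hy c1 h1
          obtain ⟨-, hc2⟩ := hy c2 h2
          rw [← hc1, ← hc2, he]
        have hmaps : ∀ col' ∈ A.erase (c s(p.1, p.2)), y col' ∈ univ.filter
            (fun w => G.Adj w p.2 ∧ c s(w, p.2) ∈ A ∧ c s(w, p.2) ≠ c s(p.1, p.2)) := by
          intro col' hcol'
          obtain ⟨hadj', hc'⟩ := hy col' hcol'
          have hsw : c s(y col', p.2) = col' := by rw [Sym2.eq_swap]; exact hc'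
          refine Finset.mem_filter.mpr ⟨Finset.mem_univ _, hadj'.symm, ?_, ?_⟩
          · rw [hsw]; exact Finset.mem_of_mem_erase hcol'
          · rw [hsw]; exact (Finset.mem_erase.mp hcol').1
        have hcc := Finset.card_le_card_of_injOn y hmaps hinj
        rwa [Finset.card_erase_of_mem (Finset.mem_filter.mp hp).2.2] at hcc
      calc APA.card * (A.card - 1) = ∑ _p ∈ APA, (A.card - 1) := by
            rw [Finset.sum_const, smul_eq_mul]
        _ ≤ _ := Finset.sum_le_sum h1
    have hAPAcard : A.card * (2 * n - 2) ≤ APA.card := by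
      have h1 := Finset.card_eq_sum_card_fiberwise
        (f := fun p : V × V => c s(p.1, p.2)) (s := APA) (t := A)
        (fun p hp => (Finset.mem_filter.mp hp).2.2)
      have h2 : ∀ col ∈ A, 2 * n - 2 ≤ (APA.filter (fun p => c s(p.1, p.2) = col)).card := by
        intro col hcol
        have hconn : (Hc G c col).Connected := (Finset.mem_filter.mp hcol).2
        have hnonempty : Nonempty V := Fintype.card_pos_iff.mp (by omega)
        obtain ⟨a₀⟩ := hnonempty
        have h3 : 2 * (univ : Finset V).card ≤ 2 +
            (APA.filter (fun p => c s(p.1, p.2) = col)).card := by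
          refine two_mul_card_reach_le (Hc G c col) a₀ univ
            (fun w _ => hconn.preconnected a₀ w) _ ?_
          intro yy ww hadj' _hreach
          refine Finset.mem_filter.mpr ⟨Finset.mem_filter.mpr
            ⟨Finset.mem_univ _, hadj'.1, ?_⟩, hadj'.2⟩
          rw [hadj'.2]
          exact hcol
        rw [Finset.card_univ] at h3
        omega
      calc A.card * (2 * n - 2) = ∑ _col ∈ A, (2 * n - 2) := by
            rw [Finset.sum_const, smul_eq_mul]
        _ ≤ ∑ col ∈ A, (APA.filter (fun p => c s(p.1, p.2) = col)).card :=
            Finset.sum_le_sum h2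
        _ = APA.card := h1.symm
    have hM4 : 4 * M ≤ A.card * (2 * n - 2) := by
      have hM' : M = n - 2 := hMdef
      have h5 : 4 * M ≤ 2 * (2 * n - 2) := by omega
      calc 4 * M ≤ 2 * (2 * n - 2) := h5
        _ ≤ A.card * (2 * n - 2) := Nat.mul_le_mul_right _ hA2
    calc (A.card - 1) * (4 * M) ≤ (A.card - 1) * (A.card * (2 * n - 2)) :=
          Nat.mul_le_mul_left _ hM4
      _ ≤ (A.card - 1) * APA.card := Nat.mul_le_mul_left _ hAPAcard
      _ = APA.card * (A.card - 1) := Nat.mul_comm _ _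
      _ ≤ HA.card := hHAcard
      _ ≤ HS.card := Finset.card_le_card hHAsub
  -- Final assembly
  have hfinal4 : 4 * S + (K.card - 1) * (4 * M) ≤ 4 * E.card * M := by
    have hsub : A ⊆ K := Finset.filter_subset _ _
    have hhK : A.card ≤ K.card := Finset.card_le_card hsub
    have hcardKA : (K \ A).card = K.card - A.card := Finset.card_sdiff_of_subset hsub
    have hle : K.card - 1 ≤ (A.card - 1) + (K \ A).card := by omega
    have h6 : (K.card - 1) * (4 * M) ≤ (A.card - 1) * (4 * M) + (K \ A).card * (4 * M) := by
      calc (K.card - 1) * (4 * M) ≤ ((A.card - 1) + (K \ A).card) * (4 * M) :=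
            Nat.mul_le_mul_right _ hle
        _ = _ := by rw [Nat.add_mul]
    have h7 : (K \ A).card * (4 * M) ≤ 2 * UT.card := by
      calc (K \ A).card * (4 * M) = 2 * ((K \ A).card * (2 * M)) := by ring
        _ ≤ 2 * UT.card := Nat.mul_le_mul_left _ hUTsum
    calc 4 * S + (K.card - 1) * (4 * M)
        ≤ 4 * S + ((A.card - 1) * (4 * M) + (K \ A).card * (4 * M)) :=
          Nat.add_le_add_left h6 _
      _ ≤ 4 * S + (HS.card + 2 * UT.card) :=
          Nat.add_le_add_left (Nat.add_le_add hAbound h7) _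
      _ = 2 * (2 * S) + HS.card + 2 * UT.card := by ring
      _ = 2 * TOK.card + HS.card + 2 * UT.card := by rw [hTOKcard]
      _ ≤ 2 * DT.card + 2 * UT.card := by omega
      _ = 2 * (DT.card + UT.card) := by ring
      _ = 2 * ALLT.card := by rw [hDU]
      _ = 4 * E.card * M := by rw [hALLTcard]; ring
  -- conclude
  show S + K.card * M ≤ (E.card + 1) * M
  rcases Nat.eq_zero_or_pos K.card with hK0 | hKpos
  · have h10 : S ≤ E.card * M := by
      have h9' : 4 * S ≤ 4 * (E.card * M) := by
        calc 4 * S = 4 * S + (K.card - 1) * (4 * M) := by rw [hK0]; ring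
          _ ≤ 4 * E.card * M := hfinal4
          _ = 4 * (E.card * M) := by ring
      exact Nat.le_of_mul_le_mul_left h9' (by omega)
    rw [hK0, zero_mul, add_zero]
    calc S ≤ E.card * M := h10
      _ ≤ (E.card + 1) * M := Nat.mul_le_mul_right _ (by omega)
  · have h9 : 4 * (S + (K.card - 1) * M) ≤ 4 * (E.card * M) := by
      calc 4 * (S + (K.card - 1) * M) = 4 * S + (K.card - 1) * (4 * M) := by ring
        _ ≤ 4 * E.card * M := hfinal4
        _ = 4 * (E.card * M) := by ring
    have h10 : S + (K.card - 1) * M ≤ E.card * M := Nat.le_of_mul_le_mul_left h9 (by omega)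
    obtain ⟨k, hk⟩ := Nat.exists_eq_succ_of_ne_zero (Nat.pos_iff_ne_zero.mp hKpos)
    calc S + K.card * M = (S + (K.card - 1) * M) + M := by
          rw [hk]; simp [Nat.succ_mul]; ring
      _ ≤ E.card * M + M := Nat.add_le_add_right h10 _
      _ = (E.card + 1) * M := by ring

theorem stmt14 [Fintype V] [DecidableEq V] (G : SimpleGraph V) (hn : 3 ≤ Fintype.card V)
    (c : Sym2 V → ℕ) (r : ℕ) (hr : (c '' G.edgeSet).ncard = r)
    (f : Sym2 V → ℕ)
    (hf : ∀ u v : V, u ≠ v → HasDisjointMonoSuperPaths G c u v (f s(u, v))) :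
    ⌈((∑ e ∈ Finset.univ.filter (fun e : Sym2 V => ¬ e.IsDiag), f e : ℕ) : ℚ) /
        ((Fintype.card V : ℚ) - 2)⌉ + (r : ℤ) - 1 ≤ (G.edgeSet.ncard : ℤ) := by
  classical
  have key := main_count G hn c f hf
  rw [hr] at key
  set S : ℕ := ∑ e ∈ Finset.univ.filter (fun e : Sym2 V => ¬ e.IsDiag), f e with hS
  set e : ℕ := G.edgeSet.ncard with he
  have h2n : 2 ≤ Fintype.card V := by omega
  have hpos : (0 : ℚ) < (Fintype.card V : ℚ) - 2 := by
    have h3 : (3 : ℚ) ≤ (Fintype.card V : ℚ) := by exact_mod_cast hn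
    linarith
  have hcast : ((Fintype.card V - 2 : ℕ) : ℚ) = (Fintype.card V : ℚ) - 2 := by
    push_cast [Nat.cast_sub h2n]
    ring
  have hkeyQ : (S : ℚ) + (r : ℚ) * ((Fintype.card V : ℚ) - 2)
      ≤ ((e : ℚ) + 1) * ((Fintype.card V : ℚ) - 2) := by
    calc (S : ℚ) + (r : ℚ) * ((Fintype.card V : ℚ) - 2)
        = ((S + r * (Fintype.card V - 2) : ℕ) : ℚ) := by push_cast [hcast]; ring
      _ ≤ (((e + 1) * (Fintype.card V - 2) : ℕ) : ℚ) := by exact_mod_cast key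
      _ = ((e : ℚ) + 1) * ((Fintype.card V : ℚ) - 2) := by push_cast [hcast]; ring
  have hceil : ⌈(S : ℚ) / ((Fintype.card V : ℚ) - 2)⌉ ≤ (e : ℤ) + 1 - r := by
    rw [Int.ceil_le, div_le_iff₀ hpos]
    have hc2 : (((e : ℤ) + 1 - r : ℤ) : ℚ) = (e : ℚ) + 1 - r := by push_cast; ring
    rw [hc2]
    nlinarith [hkeyQ, hpos]
  linarith [hceil]
end

section
/- Let G be a graph on n ≥ 3 vertices with e(G) ≥ 1, and suppose f is as above with e(G) = ⌈w(f)/(n−2)⌉ (equality in the super-path bound). Then the maximum and minimum degree of G differ by at most 1. -/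
open SimpleGraph Finset

variable {V : Type*}

lemma getVert_one_ne_end {G : SimpleGraph V} {u v : V} {p : G.Walk u v}
    (hp : p.IsPath) (hl : 2 ≤ p.length) : p.getVert 1 ≠ v := by
  cases p with
  | nil => simp at hl
  | cons h q =>
    rw [SimpleGraph.Walk.getVert_cons_succ, SimpleGraph.Walk.getVert_zero]
    rintro rfl
    have hq : q = SimpleGraph.Walk.nil := SimpleGraph.Walk.isPath_iff_eq_nil.mp hp.of_cons
    rw [hq] at hl
    simp at hl

lemma superpath_degree_bound {G : SimpleGraph V} [Fintype V] [DecidableEq V]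
    [DecidableRel G.Adj] {u v : V} {m : ℕ}
    (hm : HasDisjointSuperPaths G u v m) :
    m + (if G.Adj u v then 1 else 0) ≤ G.degree u := by
  obtain ⟨P, h1, h2⟩ := hm
  set g : Fin m → V := fun i => (P i).getVert 1 with hg
  have hlen : ∀ i, 2 ≤ (P i).length := fun i => (h1 i).2
  have hnil : ∀ i, ¬ (P i).Nil := by
    intro i
    rw [SimpleGraph.Walk.nil_iff_length_eq]
    have := hlen i; omega
  have hadj : ∀ i, G.Adj u (g i) := fun i => SimpleGraph.Walk.adj_snd (hnil i)
  have hnev : ∀ i, g i ≠ v := fun i => getVert_one_ne_end (h1 i).1 (hlen i)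
  have hneu : ∀ i, g i ≠ u := fun i h => G.irrefl (h ▸ hadj i)
  have hmem : ∀ i, g i ∈ (G.neighborFinset u).erase v := fun i =>
    Finset.mem_erase.mpr ⟨hnev i, (SimpleGraph.mem_neighborFinset _ _ _).mpr (hadj i)⟩
  have hsup : ∀ i, g i ∈ (P i).support := fun i =>
    SimpleGraph.Walk.mem_support_iff_exists_getVert.mpr ⟨1, rfl, by have := hlen i; omega⟩
  have hinj : Function.Injective g := by
    intro i j hij
    by_contra hne
    have hsupj : g i ∈ (P j).support := hij ▸ hsup j
    rcases h2 hne (g i) (hsup i) hsupj with h | h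
    exacts [hneu i h, hnev i h]
  have hcard : m ≤ ((G.neighborFinset u).erase v).card := by
    classical
    calc m = (Finset.univ : Finset (Fin m)).card := by simp
    _ ≤ _ := Finset.card_le_card_of_injOn g (fun i _ => hmem i) hinj.injOn
  by_cases hA : G.Adj u v
  · rw [if_pos hA]
    have hv : v ∈ G.neighborFinset u := (SimpleGraph.mem_neighborFinset _ _ _).mpr hA
    have h1' := Finset.card_erase_of_mem hv
    have hd1 : 1 ≤ (G.neighborFinset u).card := Finset.card_pos.mpr ⟨v, hv⟩
    have hdd : G.degree u = (G.neighborFinset u).card := rfl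
    omega
  · rw [if_neg hA, add_zero]
    exact hcard.trans (Finset.card_le_card (Finset.erase_subset _ _))

lemma sum_offDiag_eq {M : Type*} [AddCommMonoid M] [DecidableEq V] (s : Finset V)
    (h : V → V → M) :
    ∑ p ∈ s.offDiag, h p.1 p.2 = ∑ u ∈ s, ∑ v ∈ s.erase u, h u v := by
  have hd : s.offDiag = (s ×ˢ s).filter fun p : V × V => p.1 ≠ p.2 := by
    ext p; simp [and_assoc]
  rw [hd, Finset.sum_filter, Finset.sum_product]
  refine Finset.sum_congr rfl fun u _ => ?_
  rw [← Finset.filter_ne s u, Finset.sum_filter]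

lemma sum_pairs_eq_two_mul [Fintype V] [DecidableEq V] (g : Sym2 V → ℕ) :
    ∑ p ∈ (Finset.univ : Finset V).offDiag, g s(p.1, p.2)
      = 2 * ∑ e ∈ Finset.univ.filter (fun e : Sym2 V => ¬ e.IsDiag), g e := by
  have hmaps : ∀ p ∈ (Finset.univ : Finset V).offDiag,
      s(p.1, p.2) ∈ Finset.univ.filter (fun e : Sym2 V => ¬ e.IsDiag) := by
    intro p hp
    rw [Finset.mem_offDiag] at hp
    simpa using hp.2.2
  rw [← Finset.sum_fiberwise_of_maps_to hmaps (fun p : V × V => g s(p.1, p.2)), Finset.mul_sum]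
  refine Finset.sum_congr rfl fun e he => ?_
  rw [Finset.mem_filter] at he
  induction e using Sym2.ind with
  | _ a b =>
    have hab : a ≠ b := by simpa using he.2
    have hfib : ((Finset.univ : Finset V).offDiag.filter
        (fun p : V × V => s(p.1, p.2) = s(a, b))) = {(a, b), (b, a)} := by
      ext ⟨x, y⟩
      simp only [Finset.mem_filter, Finset.mem_offDiag, Finset.mem_univ, true_and,
        Sym2.eq_iff, Finset.mem_insert, Finset.mem_singleton, Prod.mk.injEq]
      constructor
      · rintro ⟨hxy, (⟨rfl, rfl⟩ | ⟨rfl, rfl⟩)⟩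
        · exact Or.inl ⟨rfl, rfl⟩
        · exact Or.inr ⟨rfl, rfl⟩
      · rintro (⟨rfl, rfl⟩ | ⟨rfl, rfl⟩)
        · exact ⟨hab, Or.inl ⟨rfl, rfl⟩⟩
        · exact ⟨hab.symm, Or.inr ⟨rfl, rfl⟩⟩
    rw [hfib, Finset.sum_pair (by simp [Prod.ext_iff]; intro h; exact absurd h hab)]
    have hsw : s(b, a) = s(a, b) := Sym2.eq_swap
    rw [hsw, two_mul]

theorem stmt15 [Fintype V] [DecidableEq V] (G : SimpleGraph V) (hn : 3 ≤ Fintype.card V)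
    (he : 1 ≤ G.edgeSet.ncard) (f : Sym2 V → ℕ)
    (hf : ∀ u v : V, u ≠ v → HasDisjointSuperPaths G u v (f s(u, v)))
    (heq : (G.edgeSet.ncard : ℤ) =
      ⌈((∑ e ∈ Finset.univ.filter (fun e : Sym2 V => ¬ e.IsDiag), f e : ℕ) : ℚ) /
        ((Fintype.card V : ℚ) - 2)⌉) :
    ∀ u v : V, (G.neighborSet u).ncard ≤ (G.neighborSet v).ncard + 1 := by
  classical
  have hnc : ∀ x : V, (G.neighborSet x).ncard = G.degree x := by
    intro x
    rw [Set.ncard_eq_toFinset_card']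
    rfl
  have hEncard : G.edgeSet.ncard = G.edgeFinset.card := by
    rw [Set.ncard_eq_toFinset_card']
    congr 1
  rw [hEncard] at heq
  intro u v
  rw [hnc u, hnc v]
  by_contra hcon
  push_neg at hcon
  set n : ℤ := (Fintype.card V : ℤ) with hn'
  set E : ℤ := ((G.edgeFinset.card : ℕ) : ℤ) with hE'
  set W : ℕ := ∑ e ∈ Finset.univ.filter (fun e : Sym2 V => ¬ e.IsDiag), f e with hW'
  set D : V → ℤ := fun x => (G.degree x : ℤ) with hD'
  set A : V → V → ℤ := fun x y => if G.Adj x y then 1 else 0 with hA'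
  have hdegsum : ∑ x : V, D x = 2 * E := by
    simp only [hD', hE']
    exact_mod_cast G.sum_degrees_eq_twice_card_edges
  -- per-pair bound
  have key : ∀ x y : V, x ≠ y →
      2 * (f s(x, y) : ℤ) + 2 * A x y + |D x - D y| ≤ D x + D y := by
    intro x y hxy
    have k1 : f s(x, y) + (if G.Adj x y then 1 else 0) ≤ G.degree x :=
      superpath_degree_bound (hf x y hxy)
    have k2' : f s(y, x) + (if G.Adj y x then 1 else 0) ≤ G.degree y :=
      superpath_degree_bound (hf y x hxy.symm)
    have hswap : s(y, x) = s(x, y) := Sym2.eq_swap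
    rw [hswap, G.adj_comm y x] at k2'
    have k1' : (f s(x, y) : ℤ) + A x y ≤ D x := by
      simp only [hA', hD']
      by_cases h : G.Adj x y <;> simp only [h, if_true, if_false] <;>
        [skip; rw [add_zero]] <;> exact_mod_cast (by simpa [h] using k1)
    have k2 : (f s(x, y) : ℤ) + A x y ≤ D y := by
      simp only [hA', hD']
      by_cases h : G.Adj x y <;> simp only [h, if_true, if_false] <;>
        [skip; rw [add_zero]] <;> exact_mod_cast (by simpa [h] using k2')
    rcases le_total (D x) (D y) with h | h
    · rw [abs_of_nonpos (by linarith)]; linarith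
    · rw [abs_of_nonneg (by linarith)]; linarith
  set S : ℤ := ∑ p ∈ (Finset.univ : Finset V).offDiag, |D p.1 - D p.2| with hS'
  -- summed bound
  have hsum : 2 * (2 * (W : ℤ)) + 2 * (2 * E) + S ≤ 4 * (n - 1) * E := by
    have h0 : ∑ p ∈ (Finset.univ : Finset V).offDiag,
        (2 * (f s(p.1, p.2) : ℤ) + 2 * A p.1 p.2 + |D p.1 - D p.2|)
        ≤ ∑ p ∈ (Finset.univ : Finset V).offDiag, (D p.1 + D p.2) :=
      Finset.sum_le_sum (fun p hp => key p.1 p.2 (Finset.mem_offDiag.mp hp).2.2)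
    have hP1 : ∑ p ∈ (Finset.univ : Finset V).offDiag, (f s(p.1, p.2) : ℤ) = 2 * (W : ℤ) := by
      rw [hW']
      exact_mod_cast sum_pairs_eq_two_mul (V := V) f
    have hP2 : ∑ p ∈ (Finset.univ : Finset V).offDiag, A p.1 p.2 = 2 * E := by
      rw [sum_offDiag_eq]
      have hinner : ∀ x : V, ∑ y ∈ Finset.univ.erase x, A x y = D x := by
        intro x
        simp only [hA', hD']
        rw [Finset.sum_boole]
        have hfil : (Finset.univ.erase x).filter (G.Adj x) = G.neighborFinset x := by
          ext y
          simp only [Finset.mem_filter, Finset.mem_erase, Finset.mem_univ, true_and,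
            and_true, SimpleGraph.mem_neighborFinset]
          constructor
          · rintro ⟨-, h⟩; exact h
          · intro h; exact ⟨fun hyx => G.irrefl (hyx ▸ h), h⟩
        rw [hfil]
        rfl
      rw [Finset.sum_congr rfl (fun x _ => hinner x), hdegsum]
    have hP3 : ∑ p ∈ (Finset.univ : Finset V).offDiag, (D p.1 + D p.2) = 4 * (n - 1) * E := by
      have hcv : ∑ p ∈ (Finset.univ : Finset V).offDiag, (D p.1 + D p.2)
          = ∑ x : V, ∑ y ∈ Finset.univ.erase x, (D x + D y) :=
        sum_offDiag_eq Finset.univ (fun a b => D a + D b)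
      rw [hcv]
      have hcard_e : ∀ x : V, (((Finset.univ : Finset V).erase x).card : ℤ) = n - 1 := by
        intro x
        rw [Finset.card_erase_of_mem (Finset.mem_univ x), Finset.card_univ, hn']
        have := hn; omega
      have hinner : ∀ x : V, ∑ y ∈ Finset.univ.erase x, (D x + D y)
          = (n - 1) * D x + (2 * E - D x) := by
        intro x
        rw [Finset.sum_add_distrib, Finset.sum_const, nsmul_eq_mul,
          Finset.sum_erase_eq_sub (Finset.mem_univ x), hdegsum, hcard_e]
      rw [Finset.sum_congr rfl (fun x _ => hinner x), Finset.sum_add_distrib,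
        ← Finset.mul_sum, hdegsum, Finset.sum_sub_distrib, Finset.sum_const,
        nsmul_eq_mul, Finset.card_univ, hdegsum]
      have hcast : ((Fintype.card V : ℕ) : ℤ) = n := by rw [hn']
      rw [hcast]; ring
    calc 2 * (2 * (W : ℤ)) + 2 * (2 * E) + S
        = ∑ p ∈ (Finset.univ : Finset V).offDiag,
            (2 * (f s(p.1, p.2) : ℤ) + 2 * A p.1 p.2 + |D p.1 - D p.2|) := by
          rw [Finset.sum_add_distrib, Finset.sum_add_distrib, ← Finset.mul_sum,
            ← Finset.mul_sum, hP1, hP2, hS']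
      _ ≤ _ := h0
      _ = 4 * (n - 1) * E := hP3
  -- lower bound for S from the degree gap
  have hgap : D v + 2 ≤ D u := by
    simp only [hD']
    exact_mod_cast hcon
  have huv : u ≠ v := fun h => by rw [h] at hgap; linarith
  set t : V → ℤ := fun x => ∑ y ∈ Finset.univ.erase x, |D x - D y| with ht'
  have hvu : v ∈ (Finset.univ : Finset V).erase u := Finset.mem_erase.mpr ⟨huv.symm, Finset.mem_univ v⟩
  have huv' : u ∈ (Finset.univ : Finset V).erase v := Finset.mem_erase.mpr ⟨huv, Finset.mem_univ u⟩
  set U' : Finset V := ((Finset.univ : Finset V).erase u).erase v with hU'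
  have hSconv : S = ∑ x : V, t x := by
    rw [hS']
    exact sum_offDiag_eq Finset.univ (fun a b => |D a - D b|)
  have hsplit : S = t u + (t v + ∑ x ∈ U', t x) := by
    rw [hSconv, ← Finset.add_sum_erase _ t (Finset.mem_univ u), ← Finset.add_sum_erase _ t hvu]
  have htu : t u = |D u - D v| + ∑ y ∈ U', |D u - D y| :=
    (Finset.add_sum_erase _ (fun y => |D u - D y|) hvu).symm
  have htv : t v = |D v - D u| + ∑ y ∈ U', |D v - D y| := by
    have h1 : t v = |D v - D u| + ∑ y ∈ (((Finset.univ : Finset V).erase v).erase u), |D v - D y| :=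
      (Finset.add_sum_erase _ (fun y => |D v - D y|) huv').symm
    rw [h1, Finset.erase_right_comm]
  have habs2 : (2 : ℤ) ≤ |D u - D v| := by
    rw [abs_of_nonneg (by linarith)]; linarith
  have hcardU : ((U' : Finset V).card : ℤ) = n - 2 := by
    rw [hU', Finset.card_erase_of_mem hvu, Finset.card_erase_of_mem (Finset.mem_univ u),
      Finset.card_univ, hn']
    have := hn; omega
  have habs : ∀ x, (2 : ℤ) ≤ |D u - D x| + |D v - D x| := by
    intro x
    have h1 : |D u - D v| ≤ |D u - D x| + |D x - D v| := abs_sub_le _ _ _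
    have h2 : |D x - D v| = |D v - D x| := abs_sub_comm _ _
    linarith
  have hsum1 : 2 * (n - 2) ≤ ∑ x ∈ U', t x := by
    have hc : ∑ x ∈ U', (2 : ℤ) = 2 * (n - 2) := by
      rw [Finset.sum_const, nsmul_eq_mul, hcardU]; ring
    rw [← hc]
    refine Finset.sum_le_sum fun x hx => ?_
    have hxv : x ≠ v := (Finset.mem_erase.mp hx).1
    have hxu : x ≠ u := (Finset.mem_erase.mp (Finset.mem_erase.mp hx).2).1
    have hsub : ({u, v} : Finset V) ⊆ Finset.univ.erase x := by
      intro y hy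
      rcases Finset.mem_insert.mp hy with rfl | hy
      · exact Finset.mem_erase.mpr ⟨fun h => hxu h.symm, Finset.mem_univ _⟩
      · rw [Finset.mem_singleton.mp hy]
        exact Finset.mem_erase.mpr ⟨fun h => hxv h.symm, Finset.mem_univ _⟩
    have hle : ∑ y ∈ ({u, v} : Finset V), |D x - D y| ≤ t x :=
      Finset.sum_le_sum_of_subset_of_nonneg hsub (fun y _ _ => abs_nonneg _)
    rw [Finset.sum_pair huv] at hle
    have e1 : |D x - D u| = |D u - D x| := abs_sub_comm _ _
    have e2 : |D x - D v| = |D v - D x| := abs_sub_comm _ _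
    have := habs x
    linarith
  have hsum2 : 2 * (n - 2) ≤ ∑ y ∈ U', (|D u - D y| + |D v - D y|) := by
    have hc : ∑ x ∈ U', (2 : ℤ) = 2 * (n - 2) := by
      rw [Finset.sum_const, nsmul_eq_mul, hcardU]; ring
    rw [← hc]
    exact Finset.sum_le_sum fun x _ => habs x
  have hS2 : 4 * (n - 2) ≤ S := by
    have e1 : ∑ y ∈ U', (|D u - D y| + |D v - D y|)
        = ∑ y ∈ U', |D u - D y| + ∑ y ∈ U', |D v - D y| := Finset.sum_add_distrib
    have h4 : |D v - D u| = |D u - D v| := abs_sub_comm _ _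
    linarith [hsplit, htu, htv, hsum1, hsum2, habs2]
  -- ceiling equality gives a lower bound on W
  have hpos : (0 : ℚ) < (Fintype.card V : ℚ) - 2 := by
    have h3 : (3 : ℚ) ≤ (Fintype.card V : ℚ) := by exact_mod_cast hn
    linarith
  have hWlb : (E - 1) * (n - 2) < (W : ℤ) := by
    have h2 : E - 1 < ⌈((W : ℕ) : ℚ) / ((Fintype.card V : ℚ) - 2)⌉ := by
      rw [← heq]; linarith
    have h3 : ((E - 1 : ℤ) : ℚ) < ((W : ℕ) : ℚ) / ((Fintype.card V : ℚ) - 2) :=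
      Int.lt_ceil.mp h2
    have h4 : ((E - 1 : ℤ) : ℚ) * ((Fintype.card V : ℚ) - 2) < ((W : ℕ) : ℚ) :=
      (lt_div_iff₀ hpos).mp h3
    have h5 : ((Fintype.card V : ℚ) - 2) = (((n - 2 : ℤ) : ℚ)) := by
      rw [hn']; push_cast; ring
    rw [h5, ← Int.cast_mul] at h4
    exact_mod_cast h4
  -- contradiction
  have hfin : 4 * (W : ℤ) ≤ 4 * (n - 1) * E - 4 * E - 4 * (n - 2) := by linarith
  have hx : 4 * (n - 1) * E - 4 * E - 4 * (n - 2) = 4 * ((E - 1) * (n - 2)) := by ring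
  linarith
end

section
/- Let G = K_{k,t} with t ≥ k ≥ 2 be the complete bipartite graph with parts X of size k and Y of size t. Then mc_k(K_{k,t}) = 1. -/
open SimpleGraph Finset

variable {V : Type*}

variable {G : SimpleGraph V}

lemma getVert_mem_support' {u v : V} (p : G.Walk u v) (n : ℕ) :
    p.getVert n ∈ p.support := by
  induction p generalizing n with
  | nil => simp [SimpleGraph.Walk.getVert]
  | cons h q ih =>
    cases n with
    | zero => simp [SimpleGraph.Walk.getVert]
    | succ m => simp only [SimpleGraph.Walk.getVert, SimpleGraph.Walk.support_cons,
        List.mem_cons]; exact Or.inr (ih m)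

lemma IsPath.getVert_inj' {u v : V} {p : G.Walk u v} (hp : p.IsPath) :
    ∀ i j : ℕ, i ≤ p.length → j ≤ p.length → p.getVert i = p.getVert j → i = j := by
  induction p with
  | nil => intro i j hi hj _; simp only [SimpleGraph.Walk.length_nil] at hi hj; omega
  | cons h q ih =>
    rw [SimpleGraph.Walk.cons_isPath_iff] at hp
    intro i j hi hj hij
    match i, j with
    | 0, 0 => rfl
    | 0, (m+1) =>
      exfalso
      apply hp.2
      rw [SimpleGraph.Walk.getVert_zero] at hij
      rw [SimpleGraph.Walk.getVert_cons_succ] at hij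
      rw [hij]
      exact getVert_mem_support' q m
    | (m+1), 0 =>
      exfalso
      apply hp.2
      rw [SimpleGraph.Walk.getVert_zero] at hij
      rw [SimpleGraph.Walk.getVert_cons_succ] at hij
      rw [← hij]
      exact getVert_mem_support' q m
    | (m+1), (n+1) =>
      simp only [SimpleGraph.Walk.getVert_cons_succ] at hij
      simp only [SimpleGraph.Walk.length_cons] at hi hj
      have := ih hp.1 m n (by omega) (by omega) hij
      omega

lemma edge_getVert_mem' {u v : V} (p : G.Walk u v) {n : ℕ} (hn : n < p.length) :
    s(p.getVert n, p.getVert (n+1)) ∈ p.edges := by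
  induction p generalizing n with
  | nil => simp at hn
  | cons h q ih =>
    cases n with
    | zero =>
      simp [SimpleGraph.Walk.getVert_zero, SimpleGraph.Walk.getVert_cons_succ,
        SimpleGraph.Walk.edges_cons]
    | succ m =>
      simp only [SimpleGraph.Walk.getVert_cons_succ, SimpleGraph.Walk.edges_cons, List.mem_cons]
      exact Or.inr (ih (by simpa using Nat.succ_lt_succ_iff.mp (by simpa using hn)))

lemma adj_right' {α β : Type*} {y : β} {w : α ⊕ β}
    (h : (completeBipartiteGraph α β).Adj (Sum.inr y) w) : ∃ x, w = Sum.inl x := by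
  cases w with
  | inl x => exact ⟨x, rfl⟩
  | inr z => simp [completeBipartiteGraph] at h

lemma adj_left' {α β : Type*} {x : α} {w : α ⊕ β}
    (h : (completeBipartiteGraph α β).Adj (Sum.inl x) w) : ∃ y, w = Sum.inr y := by
  cases w with
  | inl z => simp [completeBipartiteGraph] at h
  | inr y => exact ⟨y, rfl⟩

lemma colY {k t : ℕ} {c : Sym2 (Fin k ⊕ Fin t) → ℕ}
    (h : MonoKConnected (completeBipartiteGraph (Fin k) (Fin t)) k c)
    (x : Fin k) (y y' : Fin t) (hyy' : y ≠ y') :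
    c s(Sum.inl x, Sum.inr y) = c s(Sum.inl x, Sum.inr y') := by
  obtain ⟨P, hP, hdisj⟩ := h (Sum.inr y) (Sum.inr y') (by simp [hyy'])
  have hlen : ∀ i, 1 ≤ (P i).length := by
    intro i
    rcases Nat.eq_zero_or_pos (P i).length with h0 | h1
    · exact absurd (SimpleGraph.Walk.eq_of_length_eq_zero h0) (by simp [hyy'])
    · exact h1
  have hsnd : ∀ i, ∃ z, (P i).getVert 1 = Sum.inl z := by
    intro i
    have := (P i).adj_getVert_succ (show 0 < (P i).length from hlen i)
    rw [(P i).getVert_zero] at this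
    exact adj_right' this
  choose f hf using hsnd
  have finj : Function.Injective f := by
    intro i j hij
    by_contra hne
    have h1 : Sum.inl (f i) ∈ (P i).support := by
      rw [← hf i]; exact getVert_mem_support' _ 1
    have h2 : Sum.inl (f i) ∈ (P j).support := by
      rw [hij, ← hf j]; exact getVert_mem_support' _ 1
    rcases hdisj hne _ h1 h2 with h | h <;> simp at h
  have fsurj : Function.Surjective f := Finite.surjective_of_injective finj
  obtain ⟨i, hi⟩ := fsurj x
  have hpath := (hP i).1
  have h1 : (P i).getVert 1 = Sum.inl x := by rw [hf i, hi]
  have hlen2 : 2 ≤ (P i).length := by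
    by_contra hle
    have : (P i).getVert 1 = Sum.inr y' := (P i).getVert_of_length_le (by omega)
    rw [h1] at this; exact Sum.inl_ne_inr this
  have hlen_eq : (P i).length = 2 := by
    by_contra hne
    have h3 : 3 ≤ (P i).length := by omega
    have a12 := (P i).adj_getVert_succ (show 1 < (P i).length by omega)
    rw [h1] at a12
    obtain ⟨z, hz⟩ := adj_left' a12
    have a23 := (P i).adj_getVert_succ (show 2 < (P i).length by omega)
    rw [hz] at a23
    obtain ⟨x3, hx3⟩ := adj_right' a23
    obtain ⟨j, hj⟩ := fsurj x3
    by_cases hij : j = i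
    · subst hij
      have : (P j).getVert 3 = (P j).getVert 1 := by rw [hx3, hf j, hj]
      have := IsPath.getVert_inj' (hP j).1 3 1 (by omega) (by omega) this
      omega
    · have h1' : Sum.inl x3 ∈ (P i).support := by
        rw [← hx3]; exact getVert_mem_support' _ 3
      have h2' : Sum.inl x3 ∈ (P j).support := by
        rw [← hj, ← hf j]; exact getVert_mem_support' _ 1
      rcases hdisj (Ne.symm hij) _ h1' h2' with hcontra | hcontra <;> simp at hcontra
  obtain ⟨col, hcol⟩ := (hP i).2
  have e1 : s(Sum.inr y, Sum.inl x) ∈ (P i).edges := by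
    have := edge_getVert_mem' (P i) (show 0 < (P i).length by omega)
    rwa [(P i).getVert_zero, h1] at this
  have e2 : s(Sum.inl x, Sum.inr y') ∈ (P i).edges := by
    have h2v : (P i).getVert 2 = Sum.inr y' := by rw [← hlen_eq]; exact (P i).getVert_length
    have := edge_getVert_mem' (P i) (show 1 < (P i).length by omega)
    rwa [h1, h2v] at this
  have c1 := hcol _ e1
  have c2 := hcol _ e2
  rw [Sym2.eq_swap] at c1
  rw [c1, c2]

lemma colX {k t : ℕ} (hk : 2 ≤ k) (htpos : 0 < t) {c : Sym2 (Fin k ⊕ Fin t) → ℕ}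
    (h : MonoKConnected (completeBipartiteGraph (Fin k) (Fin t)) k c)
    (x x' : Fin k) (y : Fin t) :
    c s(Sum.inl x, Sum.inr y) = c s(Sum.inl x', Sum.inr y) := by
  by_cases hxx' : x = x'
  · rw [hxx']
  obtain ⟨P, hP, hdisj⟩ := h (Sum.inl x) (Sum.inl x') (by simp [hxx'])
  have i0 : Fin k := ⟨0, by omega⟩
  set p := P ⟨0, by omega⟩ with hp
  have hlen : 1 ≤ p.length := by
    rcases Nat.eq_zero_or_pos p.length with h0 | h1
    · exact absurd (SimpleGraph.Walk.eq_of_length_eq_zero h0) (by simp [hxx'])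
    · exact h1
  -- first edge from x
  have a01 := p.adj_getVert_succ (show 0 < p.length from hlen)
  rw [p.getVert_zero] at a01
  obtain ⟨y1, hy1⟩ := adj_left' a01
  have e1 : s(Sum.inl x, Sum.inr y1) ∈ p.edges := by
    have := edge_getVert_mem' p (show 0 < p.length from hlen)
    rwa [p.getVert_zero, hy1] at this
  -- last edge into x'
  have hlenr : 1 ≤ p.reverse.length := by rwa [SimpleGraph.Walk.length_reverse]
  have a01r := p.reverse.adj_getVert_succ (show 0 < p.reverse.length from hlenr)
  rw [p.reverse.getVert_zero] at a01r
  obtain ⟨y2, hy2⟩ := adj_left' a01r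
  have e2 : s(Sum.inl x', Sum.inr y2) ∈ p.edges := by
    have := edge_getVert_mem' p.reverse (show 0 < p.reverse.length from hlenr)
    rw [p.reverse.getVert_zero, hy2] at this
    rw [SimpleGraph.Walk.edges_reverse, List.mem_reverse] at this
    exact this
  obtain ⟨col, hcol⟩ := (hP _).2
  have c1 := hcol _ e1
  have c2 := hcol _ e2
  have key : c s(Sum.inl x, Sum.inr y1) = c s(Sum.inl x', Sum.inr y2) := by rw [c1, c2]
  calc c s(Sum.inl x, Sum.inr y) = c s(Sum.inl x, Sum.inr y1) := by
        by_cases hy : y = y1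
        · rw [hy]
        · exact colY h x y y1 hy
    _ = c s(Sum.inl x', Sum.inr y2) := key
    _ = c s(Sum.inl x', Sum.inr y) := by
        by_cases hy : y2 = y
        · rw [hy]
        · exact colY h x' y2 y hy

lemma color_const {k t : ℕ} (hk : 2 ≤ k) (ht : k ≤ t) {c : Sym2 (Fin k ⊕ Fin t) → ℕ}
    (h : MonoKConnected (completeBipartiteGraph (Fin k) (Fin t)) k c) :
    ∀ e ∈ (completeBipartiteGraph (Fin k) (Fin t)).edgeSet,
      c e = c s(Sum.inl (⟨0, by omega⟩ : Fin k), Sum.inr (⟨0, by omega⟩ : Fin t)) := by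
  intro e he
  induction e using Sym2.ind with
  | _ a b =>
    rw [SimpleGraph.mem_edgeSet] at he
    have key : ∀ (x : Fin k) (y : Fin t),
        c s(Sum.inl x, Sum.inr y) =
          c s(Sum.inl (⟨0, by omega⟩ : Fin k), Sum.inr (⟨0, by omega⟩ : Fin t)) := by
      intro x y
      calc c s(Sum.inl x, Sum.inr y)
          = c s(Sum.inl (⟨0, by omega⟩ : Fin k), Sum.inr y) := colX hk (by omega) h _ _ _
        _ = c s(Sum.inl (⟨0, by omega⟩ : Fin k), Sum.inr (⟨0, by omega⟩ : Fin t)) := by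
            by_cases hy : y = (⟨0, by omega⟩ : Fin t)
            · rw [hy]
            · exact colY h _ _ _ hy
    cases a with
    | inl xa =>
      cases b with
      | inl xb => simp [completeBipartiteGraph] at he
      | inr yb => exact key xa yb
    | inr ya =>
      cases b with
      | inl xb => rw [Sym2.eq_swap]; exact key xb ya
      | inr yb => simp [completeBipartiteGraph] at he

lemma adjLR {α β : Type*} (x : α) (y : β) :
    (completeBipartiteGraph α β).Adj (Sum.inl x) (Sum.inr y) := by simp

lemma adjRL {α β : Type*} (y : β) (x : α) :
    (completeBipartiteGraph α β).Adj (Sum.inr y) (Sum.inl x) := by simp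

lemma mixed {k t : ℕ} (hk : 2 ≤ k) (ht : k ≤ t) (a : Fin k) (b : Fin t) :
    ∃ P : Fin k → (completeBipartiteGraph (Fin k) (Fin t)).Walk (Sum.inl a) (Sum.inr b),
      (∀ i, (P i).IsPath) ∧ Pairwise (fun i j => InternallyDisjoint (P i) (P j)) := by
  set cst : Fin k → Fin t := fun i => ⟨i.1, lt_of_lt_of_le i.2 ht⟩ with hcst
  set g : Fin k → Fin t := fun i => if cst i = b then cst a else cst i with hg
  have hcst_inj : ∀ i j : Fin k, cst i = cst j → i = j := by
    intro i j hij
    apply Fin.ext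
    simpa [hcst] using congrArg Fin.val hij
  have hg_ne : ∀ i, i ≠ a → g i ≠ b := by
    intro i hi
    simp only [hg]
    split
    · rename_i heq
      intro hc
      exact hi (hcst_inj i a (heq.trans hc.symm))
    · assumption
  have hg_inj : ∀ i j, i ≠ a → j ≠ a → g i = g j → i = j := by
    intro i j hi hj hij
    simp only [hg] at hij
    split at hij <;> split at hij
    · rename_i h1 h2
      exact hcst_inj i j (h1.trans h2.symm)
    · rename_i h1 h2
      exact absurd (hcst_inj a j hij).symm hj
    · rename_i h1 h2
      exact absurd (hcst_inj i a hij) hi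
    · exact hcst_inj i j hij
  refine ⟨fun i => if h : i = a then SimpleGraph.Walk.cons (adjLR a b) SimpleGraph.Walk.nil
    else SimpleGraph.Walk.cons (adjLR a (g i)) (SimpleGraph.Walk.cons (adjRL (g i) i)
      (SimpleGraph.Walk.cons (adjLR i b) SimpleGraph.Walk.nil)), ?_, ?_⟩
  · intro i
    by_cases h : i = a
    · simp only [dif_pos h]
      simp [SimpleGraph.Walk.isPath_def]
    · simp only [dif_neg h]
      simp [SimpleGraph.Walk.isPath_def, hg_ne i h, h, Ne.symm h]
  · intro i j hij x hxi hxj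
    by_cases hi : i = a <;> by_cases hj : j = a
    · exact absurd (hi.trans hj.symm) hij
    · simp only [dif_pos hi, SimpleGraph.Walk.support_cons,
        SimpleGraph.Walk.support_nil, List.mem_cons, List.mem_singleton] at hxi
      rcases hxi with h | h | h
      · exact Or.inl h
      · exact Or.inr h
      · simp at h
    · simp only [dif_pos hj, SimpleGraph.Walk.support_cons,
        SimpleGraph.Walk.support_nil, List.mem_cons, List.mem_singleton] at hxj
      rcases hxj with h | h | h
      · exact Or.inl h
      · exact Or.inr h
      · simp at h
    · simp only [dif_neg hi, dif_neg hj, SimpleGraph.Walk.support_cons,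
        SimpleGraph.Walk.support_nil, List.mem_cons, List.mem_singleton] at hxi hxj
      rcases hxi with h1 | h1 | h1 | h1 | h1 <;>
        rcases hxj with h2 | h2 | h2 | h2 | h2 <;>
          first
          | (left; assumption)
          | (right; assumption)
          | (simp at h1)
          | (exfalso; first
              | exact hij (hg_inj i j hi hj h2)
              | exact hij h2
              | (subst h1; first
                  | (exact hij (hg_inj i j hi hj (Sum.inr.inj h2)))
                  | (exact hg_ne i hi (Sum.inr.inj h2))
                  | (exact hg_ne j hj (Sum.inr.inj h2.symm))
                  | (exact hij (Sum.inl.inj h2))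
                  | (simp at h2)))

lemma monoconst {k t : ℕ} (hk : 2 ≤ k) (ht : k ≤ t) :
    MonoKConnected (completeBipartiteGraph (Fin k) (Fin t)) k (fun _ => 0) := by
  have mono : ∀ (u v : Fin k ⊕ Fin t)
      (p : (completeBipartiteGraph (Fin k) (Fin t)).Walk u v),
      Monochromatic (fun _ => (0 : ℕ)) p := fun u v p => ⟨0, fun _ _ => rfl⟩
  intro u v huv
  cases u with
  | inl a =>
    cases v with
    | inl b =>
      have hab : a ≠ b := fun h => huv (congrArg Sum.inl h)
      refine ⟨fun i => SimpleGraph.Walk.cons (adjLR a ⟨i.1, lt_of_lt_of_le i.2 ht⟩)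
        (SimpleGraph.Walk.cons (adjRL _ b) SimpleGraph.Walk.nil), fun i => ⟨?_, mono _ _ _⟩, ?_⟩
      · simp [SimpleGraph.Walk.isPath_def, hab]
      · intro i j hij x hxi hxj
        simp only [SimpleGraph.Walk.support_cons, SimpleGraph.Walk.support_nil,
          List.mem_cons, List.mem_singleton] at hxi hxj
        rcases hxi with h1 | h1 | h1 | h1
        · exact Or.inl h1
        · rcases hxj with h2 | h2 | h2 | h2
          · exact absurd (h2.symm.trans h1) (by simp)
          · exfalso
            have hmid : (⟨i.1, lt_of_lt_of_le i.2 ht⟩ : Fin t)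
                = ⟨j.1, lt_of_lt_of_le j.2 ht⟩ := Sum.inr.inj (h1.symm.trans h2)
            exact hij (Fin.ext (show i.1 = j.1 by simpa [Fin.mk.injEq] using hmid))
          · exact absurd (h2.symm.trans h1) (by simp)
          · simp at h2
        · exact Or.inr h1
        · simp at h1
    | inr b =>
      obtain ⟨P, hP, hdisj⟩ := mixed hk ht a b
      exact ⟨P, fun i => ⟨hP i, mono _ _ _⟩, hdisj⟩
  | inr a =>
    cases v with
    | inl b =>
      obtain ⟨P, hP, hdisj⟩ := mixed hk ht b a
      refine ⟨fun i => (P i).reverse, fun i => ⟨(hP i).reverse, mono _ _ _⟩, ?_⟩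
      intro i j hij x hxi hxj
      rw [SimpleGraph.Walk.support_reverse, List.mem_reverse] at hxi hxj
      rcases hdisj hij x hxi hxj with h | h
      · exact Or.inr h
      · exact Or.inl h
    | inr b =>
      have hab : a ≠ b := fun h => huv (congrArg Sum.inr h)
      refine ⟨fun i => SimpleGraph.Walk.cons (adjRL a i)
        (SimpleGraph.Walk.cons (adjLR i b) SimpleGraph.Walk.nil), fun i => ⟨?_, mono _ _ _⟩, ?_⟩
      · simp [SimpleGraph.Walk.isPath_def, hab]
      · intro i j hij x hxi hxj
        simp only [SimpleGraph.Walk.support_cons, SimpleGraph.Walk.support_nil,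
          List.mem_cons, List.mem_singleton] at hxi hxj
        rcases hxi with h1 | h1 | h1 | h1
        · exact Or.inl h1
        · rcases hxj with h2 | h2 | h2 | h2
          · exact absurd (h2.symm.trans h1) (by simp)
          · exact absurd (Sum.inl.inj (h1.symm.trans h2)) hij
          · exact absurd (h2.symm.trans h1) (by simp)
          · simp at h2
        · exact Or.inr h1
        · simp at h1

theorem stmt19 (k t : ℕ) (hk : 2 ≤ k) (ht : k ≤ t) :
    mck (completeBipartiteGraph (Fin k) (Fin t)) k = 1 := by
  have e0mem : s(Sum.inl (⟨0, by omega⟩ : Fin k), Sum.inr (⟨0, by omega⟩ : Fin t)) ∈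
      (completeBipartiteGraph (Fin k) (Fin t)).edgeSet :=
    by rw [SimpleGraph.mem_edgeSet]; exact adjLR _ _
  have hS : {r : ℕ | ∃ c : Sym2 (Fin k ⊕ Fin t) → ℕ,
      MonoKConnected (completeBipartiteGraph (Fin k) (Fin t)) k c ∧
      (c '' (completeBipartiteGraph (Fin k) (Fin t)).edgeSet).ncard = r} = {1} := by
    ext r
    simp only [Set.mem_setOf_eq, Set.mem_singleton_iff]
    constructor
    · rintro ⟨c, hc, rfl⟩
      have himg : c '' (completeBipartiteGraph (Fin k) (Fin t)).edgeSet =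
          {c s(Sum.inl (⟨0, by omega⟩ : Fin k), Sum.inr (⟨0, by omega⟩ : Fin t))} := by
        apply Set.Subset.antisymm
        · rintro b ⟨e, he, rfl⟩
          exact color_const hk ht hc e he
        · rintro b hb
          rw [Set.mem_singleton_iff] at hb
          exact ⟨_, e0mem, hb.symm⟩
      rw [himg, Set.ncard_singleton]
    · rintro rfl
      refine ⟨fun _ => 0, monoconst hk ht, ?_⟩
      have himg : (fun _ => (0 : ℕ)) '' (completeBipartiteGraph (Fin k) (Fin t)).edgeSet
          = {0} := by
        apply Set.Subset.antisymm
        · rintro b ⟨e, _, rfl⟩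
          rfl
        · rintro b hb
          rw [Set.mem_singleton_iff] at hb
          exact ⟨_, e0mem, hb.symm⟩
      rw [himg, Set.ncard_singleton]
  rw [mck, hS]
  exact csSup_singleton 1
end
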